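/- arXiv:1007.0189 — 10 statements merged into one kernel-verified Lean document; each statement's English description precedes it below -/
import Mathlib

section
/- Let (X,T) be a dynamical system on a compact metric space and x, y ∈ X a proximal pair. Then for every δ > 0, the set N_δ(x,y) = {n ∈ ℤ : d(Tⁿx, Tⁿy) < δ} is thick, i.e., contains arbitrarily long runs of consecutive integers. -/
/-- `S ⊆ ℤ` is thick: it contains arbitrarily long intervals of consecutive integers. -/
def IsThick (S : Set ℤ) : Prop :=
  ∀ m : ℕ, ∃ n : ℤ, ∀ k : ℕ, k ≤ m → n + (k : ℤ) ∈ S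

private lemma zpow_continuous {X : Type*} [MetricSpace X] (T : X ≃ₜ X) (n : ℤ) :
    Continuous ⇑(T.toEquiv ^ n) := by
  induction n using Int.induction_on with
  | zero => simpa using continuous_id
  | succ k ih =>
      have h : ⇑(T.toEquiv ^ ((k : ℤ) + 1)) = ⇑T ∘ ⇑(T.toEquiv ^ (k : ℤ)) := by
        ext z
        rw [show ((k : ℤ) + 1) = 1 + k by ring, zpow_add, zpow_one, Equiv.Perm.mul_apply]
        rfl
      rw [h]; exact T.continuous.comp ih
  | pred k ih =>
      have h : ⇑(T.toEquiv ^ (-(k : ℤ) - 1)) = ⇑T.symm ∘ ⇑(T.toEquiv ^ (-(k : ℤ))) := by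
        ext z
        rw [show (-(k : ℤ) - 1) = -1 + -k by ring, zpow_add, zpow_neg_one, Equiv.Perm.mul_apply]
        rfl
      rw [h]; exact T.symm.continuous.comp ih

theorem proximal_return_times_thick {X : Type*} [MetricSpace X] [CompactSpace X]
    (T : X ≃ₜ X) (x y : X)
    (hprox : ∀ δ > (0 : ℝ), ∃ n : ℤ, dist ((T.toEquiv ^ n) x) ((T.toEquiv ^ n) y) < δ) :
    ∀ δ > (0 : ℝ),
      IsThick {n : ℤ | dist ((T.toEquiv ^ n) x) ((T.toEquiv ^ n) y) < δ} := by
  intro δ hδ m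
  -- for each k, get a modulus of uniform continuity for T^k
  have huc : ∀ k : ℕ, ∃ ε > (0 : ℝ), ∀ a b : X, dist a b < ε →
      dist ((T.toEquiv ^ (k : ℤ)) a) ((T.toEquiv ^ (k : ℤ)) b) < δ := by
    intro k
    have := CompactSpace.uniformContinuous_of_continuous (zpow_continuous T (k : ℤ))
    rcases Metric.uniformContinuous_iff.mp this δ hδ with ⟨ε, hε, h⟩
    exact ⟨ε, hε, fun a b hab => h hab⟩
  choose ε hε hεδ using huc
  set ε0 : ℝ := (Finset.range (m + 1)).inf' (by simp) ε with hε0def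
  have hε0pos : 0 < ε0 := by
    apply Finset.lt_inf'_iff (by simp : (Finset.range (m+1)).Nonempty) |>.mpr
    intro i _; exact hε i
  obtain ⟨n, hn⟩ := hprox ε0 hε0pos
  refine ⟨n, fun k hk => ?_⟩
  have hle : ε0 ≤ ε k :=
    Finset.inf'_le _ (Finset.mem_range.mpr (Nat.lt_succ_of_le hk))
  have hkey : dist ((T.toEquiv ^ (k : ℤ)) ((T.toEquiv ^ n) x))
      ((T.toEquiv ^ (k : ℤ)) ((T.toEquiv ^ n) y)) < δ :=
    hεδ k _ _ (lt_of_lt_of_le hn hle)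
  have heq : ∀ z : X, (T.toEquiv ^ (n + (k : ℤ))) z
      = (T.toEquiv ^ (k : ℤ)) ((T.toEquiv ^ n) z) := by
    intro z; rw [add_comm, zpow_add, Equiv.Perm.mul_apply]
  simpa [Set.mem_setOf_eq, heq] using hkey
end

section
/- Let (X,T) be a dynamical system on a compact metric space and d ≥ 1 an integer. Then the proximal relation P(X) is contained in the regionally proximal relation of order d, RP^[d](X). -/
/-- The regionally proximal relation of order `d`. -/
def RP {X : Type*} [MetricSpace X] (T : X ≃ₜ X) (d : ℕ) : Set (X × X) :=
  {p | ∀ δ > (0 : ℝ), ∃ x' y' : X, ∃ n : Fin d → ℤ,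
    dist p.1 x' < δ ∧ dist p.2 y' < δ ∧
    ∀ ε : Fin d → Bool, ε ≠ (fun _ => false) →
      dist ((T.toEquiv ^ (∑ i, if ε i then n i else 0)) x')
           ((T.toEquiv ^ (∑ i, if ε i then n i else 0)) y') < δ}

/-- The proximal relation. -/
def ProximalRel {X : Type*} [MetricSpace X] (T : X ≃ₜ X) : Set (X × X) :=
  {p | ∀ δ > (0 : ℝ), ∃ n : ℤ, dist ((T.toEquiv ^ n) p.1) ((T.toEquiv ^ n) p.2) < δ}


lemma contPerm {X : Type*} [TopologicalSpace X] (e : Equiv.Perm X) (he : Continuous ⇑e)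
    (n : ℕ) : Continuous ⇑(e ^ n) := by
  induction n with
  | zero => simpa using continuous_id
  | succ n ih => rw [pow_succ]; simpa [Equiv.Perm.coe_mul] using ih.comp he

lemma contZpow {X : Type*} [TopologicalSpace X] (T : X ≃ₜ X) (s : ℤ) :
    Continuous ⇑(T.toEquiv ^ s) := by
  cases s with
  | ofNat n => rw [Int.ofNat_eq_natCast, zpow_natCast]; exact contPerm _ T.continuous n
  | negSucc n =>
      rw [zpow_negSucc, ← inv_pow]
      have h : (T.toEquiv)⁻¹ = T.symm.toEquiv := rfl
      rw [h]; exact contPerm _ T.symm.continuous _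

lemma keyLemma {X : Type*} [MetricSpace X] [CompactSpace X] (T : X ≃ₜ X) (x y : X)
    (hp : ∀ δ > (0 : ℝ), ∃ n : ℤ, dist ((T.toEquiv ^ n) x) ((T.toEquiv ^ n) y) < δ) :
    ∀ k : ℕ, ∀ δ > (0 : ℝ), ∃ n : Fin k → ℤ, ∀ ε : Fin k → Bool, ε ≠ (fun _ => false) →
      dist ((T.toEquiv ^ (∑ i, if ε i then n i else 0)) x)
           ((T.toEquiv ^ (∑ i, if ε i then n i else 0)) y) < δ := by
  intro k
  induction k with
  | zero =>
      intro δ hδ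
      refine ⟨fun i => 0, fun ε hε => absurd ?_ hε⟩
      funext i; exact absurd i.2 (by omega)
  | succ k ih =>
      intro δ hδ
      obtain ⟨n, hn⟩ := ih δ hδ
      -- uniform continuity for each relevant power
      have hu : ∀ s : ℤ, ∃ η > (0 : ℝ), ∀ a b : X, dist a b < η →
          dist ((T.toEquiv ^ s) a) ((T.toEquiv ^ s) b) < δ := by
        intro s
        have := CompactSpace.uniformContinuous_of_continuous (contZpow T s)
        rw [Metric.uniformContinuous_iff] at this
        obtain ⟨η, hη, h⟩ := this δ hδ
        exact ⟨η, hη, fun a b hab => h hab⟩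
      choose η hη1 hη2 using hu
      -- the finitely many subset sums
      set S : Finset ℤ :=
        Finset.image (fun ε : Fin k → Bool => ∑ i, if ε i then n i else 0) Finset.univ with hS
      have hSne : S.Nonempty := ⟨_, Finset.mem_image_of_mem _ (Finset.mem_univ (fun _ => false))⟩
      set η₀ : ℝ := min δ (S.inf' hSne η) with hη₀def
      have hη₀pos : 0 < η₀ := by
        apply lt_min hδ
        rw [Finset.lt_inf'_iff]
        exact fun s hs => hη1 s
      obtain ⟨m, hm⟩ := hp η₀ hη₀pos
      refine ⟨Fin.snoc n m, ?_⟩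
      intro ε hε
      have hsum : (∑ i : Fin (k+1), if ε i then Fin.snoc n m i else 0)
          = (∑ i : Fin k, if ε i.castSucc then n i else 0)
            + (if ε (Fin.last k) then m else 0) := by
        rw [Fin.sum_univ_castSucc]
        simp [Fin.snoc_castSucc, Fin.snoc_last]
      rw [hsum]
      by_cases hlast : ε (Fin.last k) = true
      · -- sum = s + m
        rw [hlast, if_pos rfl]
        set s : ℤ := ∑ i : Fin k, if ε i.castSucc then n i else 0 with hs
        have hmem : s ∈ S := Finset.mem_image_of_mem _ (Finset.mem_univ (fun (i : Fin k) => ε i.castSucc))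
        have hm' : dist ((T.toEquiv ^ m) x) ((T.toEquiv ^ m) y) < η s :=
          lt_of_lt_of_le hm (le_trans (min_le_right _ _) (Finset.inf'_le _ hmem))
        have := hη2 s _ _ hm'
        have happ : ∀ z : X, (T.toEquiv ^ (s + m)) z = (T.toEquiv ^ s) ((T.toEquiv ^ m) z) := by
          intro z; rw [zpow_add]; rfl
        rw [happ, happ]
        exact this
      · -- reduces to IH
        rw [if_neg hlast, add_zero]
        apply hn
        intro hc
        apply hε
        funext i
        rcases Fin.eq_castSucc_or_eq_last i with ⟨j, rfl⟩ | rfl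
        · exact congrFun hc j
        · simpa using hlast

theorem proximal_subset_RP {X : Type*} [MetricSpace X] [CompactSpace X]
    (T : X ≃ₜ X) (d : ℕ) (hd : 1 ≤ d) :
    ProximalRel T ⊆ RP T d := by
  intro p hp δ hδ
  obtain ⟨n, hn⟩ := keyLemma T p.1 p.2 hp d δ hδ
  exact ⟨p.1, p.2, n, by simpa using hδ, by simpa using hδ, hn⟩
end

section
/- If (X,T) is a weakly mixing dynamical system on a compact metric space (so the proximal relation P(X) is dense in X × X), then RP^[d](X) = X × X for every d ≥ 1. -/
/-- Weak mixing: the product system `(X × X, T × T)` is topologically transitive. -/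
def WeaklyMixing {X : Type*} [TopologicalSpace X] (T : X ≃ₜ X) : Prop :=
  ∀ U V : Set (X × X), IsOpen U → IsOpen V → U.Nonempty → V.Nonempty →
    ∃ n : ℤ, ((fun p : X × X => ((T.toEquiv ^ n) p.1, (T.toEquiv ^ n) p.2)) '' U ∩ V).Nonempty

lemma continuous_zpow_toEquiv {X : Type*} [TopologicalSpace X] (T : X ≃ₜ X) :
    ∀ s : ℤ, Continuous fun a => (T.toEquiv ^ s) a := by
  intro s
  induction s using Int.induction_on with
  | zero => simpa using continuous_id'
  | succ n ih =>
    have h : ∀ a, (T.toEquiv ^ ((n : ℤ) + 1)) a = (T.toEquiv ^ (n : ℤ)) (T a) := by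
      intro a
      rw [zpow_add_one, Equiv.Perm.mul_apply]
      rfl
    simp only [h]
    exact ih.comp T.continuous
  | pred n ih =>
    have h : ∀ a, (T.toEquiv ^ (-(n : ℤ) - 1)) a = (T.toEquiv ^ (-(n : ℤ))) (T.symm a) := by
      intro a
      rw [zpow_sub_one, Equiv.Perm.mul_apply]
      rfl
    simp only [h]
    exact ih.comp T.symm.continuous

lemma zpow_add_apply_toEquiv {X : Type*} [TopologicalSpace X] (T : X ≃ₜ X) (a b : ℤ) (x : X) :
    (T.toEquiv ^ (a + b)) x = (T.toEquiv ^ a) ((T.toEquiv ^ b) x) := by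
  rw [zpow_add, Equiv.Perm.mul_apply]

theorem weakly_mixing_RP_univ {X : Type*} [MetricSpace X] [CompactSpace X]
    (T : X ≃ₜ X) (hwm : WeaklyMixing T) :
    ∀ d : ℕ, 1 ≤ d → RP T d = Set.univ := by
  intro d _hd
  ext ⟨x, y⟩
  simp only [Set.mem_univ, iff_true]
  intro δ hδ
  -- main construction
  have key : ∀ k : ℕ, ∃ (U : Set (X × X)) (n : Fin k → ℤ), IsOpen U ∧ U.Nonempty ∧
      U ⊆ Metric.ball x δ ×ˢ Metric.ball y δ ∧
      ∀ ε : Fin k → Bool, ε ≠ (fun _ => false) → ∀ p ∈ U,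
        dist ((T.toEquiv ^ (∑ i, if ε i then n i else 0)) p.1)
             ((T.toEquiv ^ (∑ i, if ε i then n i else 0)) p.2) < δ := by
    intro k
    induction k with
    | zero =>
      refine ⟨Metric.ball x δ ×ˢ Metric.ball y δ, fun i => 0, ?_, ?_, subset_rfl, ?_⟩
      · exact Metric.isOpen_ball.prod Metric.isOpen_ball
      · exact ⟨(x, y), Metric.mem_ball_self hδ, Metric.mem_ball_self hδ⟩
      · intro ε hε
        exact absurd (funext fun i => i.elim0) hε
    | succ k ih =>
      obtain ⟨U, n, hUo, hUne, hUsub, hU⟩ := ih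
      set s : (Fin k → Bool) → ℤ := fun ε => ∑ i, if ε i then n i else 0 with hs
      set G : Set (X × X) :=
        {p | ∀ ε : Fin k → Bool, dist ((T.toEquiv ^ s ε) p.1) ((T.toEquiv ^ s ε) p.2) < δ}
        with hG
      have hGo : IsOpen G := by
        have : G = ⋂ ε : Fin k → Bool,
            {p : X × X | dist ((T.toEquiv ^ s ε) p.1) ((T.toEquiv ^ s ε) p.2) < δ} := by
          ext p; simp [hG, Set.mem_iInter]
        rw [this]
        refine isOpen_iInter_of_finite fun ε => ?_
        exact isOpen_lt
          (Continuous.dist ((continuous_zpow_toEquiv T (s ε)).comp continuous_fst)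
            ((continuous_zpow_toEquiv T (s ε)).comp continuous_snd)) continuous_const
      have hGne : G.Nonempty := ⟨(x, x), fun ε => by simpa using hδ⟩
      obtain ⟨m, q, ⟨p, hpU, hpq⟩, hqG⟩ := hwm U G hUo hGo hUne hGne
      set F : X × X → X × X := fun p => ((T.toEquiv ^ m) p.1, (T.toEquiv ^ m) p.2) with hF
      refine ⟨U ∩ F ⁻¹' G, Fin.snoc n m, ?_, ⟨p, hpU, by rw [Set.mem_preimage, hpq]; exact hqG⟩,
        fun p hp => hUsub hp.1, ?_⟩
      · exact hUo.inter (hGo.preimage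
          (((continuous_zpow_toEquiv T m).comp continuous_fst).prodMk
            ((continuous_zpow_toEquiv T m).comp continuous_snd)))
      · intro ε' hε' p' hp'
        set ε : Fin k → Bool := fun i => ε' i.castSucc with hε
        have hsum : (∑ i : Fin (k+1), if ε' i then Fin.snoc n m i else (0:ℤ)) =
            s ε + (if ε' (Fin.last k) then m else 0) := by
          rw [Fin.sum_univ_castSucc]
          simp [hs, hε, Fin.snoc_castSucc, Fin.snoc_last]
        rcases h : ε' (Fin.last k) with _ | _
        · -- last coordinate false: reduces to the inductive hypothesis
          have hεne : ε ≠ (fun _ => false) := by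
            intro hc
            apply hε'
            funext i
            refine Fin.lastCases ?_ ?_ i
            · exact h
            · intro j
              exact congrFun hc j
          have := hU ε hεne p' hp'.1
          rw [hsum, h]
          simpa using this
        · -- last coordinate true: use membership of F p' in G
          have hmem : F p' ∈ G := hp'.2
          have := hmem ε
          rw [hsum, h]
          simp only [if_pos]
          calc dist ((T.toEquiv ^ (s ε + m)) p'.1) ((T.toEquiv ^ (s ε + m)) p'.2)
              = dist ((T.toEquiv ^ s ε) ((T.toEquiv ^ m) p'.1))
                  ((T.toEquiv ^ s ε) ((T.toEquiv ^ m) p'.2)) := by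
                rw [zpow_add_apply_toEquiv, zpow_add_apply_toEquiv]
            _ < δ := this
  obtain ⟨U, n, hUo, hUne, hUsub, hU⟩ := key d
  obtain ⟨⟨x', y'⟩, hp⟩ := hUne
  have hball := hUsub hp
  refine ⟨x', y', n, ?_, ?_, fun ε hε => hU ε hε (x', y') hp⟩
  · exact (dist_comm x' x ▸ Metric.mem_ball.mp hball.1)
  · exact (dist_comm y' y ▸ Metric.mem_ball.mp hball.2)
end

section
/- Let (X,T) be a minimal dynamical system on a compact metric space, x ∈ X, U an open neighborhood of x, and S = {n ∈ ℤ : Tⁿx ∈ U}. Then for each d ≥ 1, the set {(n₁,...,n_d) ∈ ℤ^d : n₁ε₁ + ⋯ + n_dε_d ∈ S for all (ε₁,...,ε_d) ∈ {0,1}^d} is syndetic in ℤ^d. -/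
/- We prove the Host–Kra–Maass cube-syndeticity theorem via the algebra of the
Stone–Čech compactification (idempotent ultrafilters / minimal left ideals).

Sketch: let `p` be an idempotent of a minimal left ideal `L₀` of `βℤ` with
`p ⋆ x = x` (exists since `(X,T)` is minimal).  Inside `β(ℤ^d)` the set `𝔏` of
ultrafilters all of whose face-sum projections lie in `L₀` is a nonempty closed
left ideal, hence contains a minimal left ideal `L̂`, which contains an
idempotent `u`.  All face projections of `u` are idempotents of `L₀`, so they
are absorbed by `p` (`p + c = p`).  Hence `w* := (p ⊗ ⋯ ⊗ p) + u ∈ L̂` has all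
of its face projections equal to `p`, so it fixes the diagonal point
`x^[d]`.  Minimality of `L̂` plus density of principal ultrafilters and
compactness then yields syndeticity of the cube return times. -/

open Filter Topology Set

attribute [local instance] Ultrafilter.add Ultrafilter.addSemigroup

namespace CubeSyndetic

/-! ### Generic lemmas about the ultrafilter semigroup -/

section Semigroup

variable {S : Type*} [AddSemigroup S]

theorem mem_uadd {p q : Ultrafilter S} {s : Set S} :
    s ∈ p + q ↔ {a | {b | a + b ∈ s} ∈ q} ∈ p := by
  have h := Ultrafilter.eventually_add p q (· ∈ s)
  simpa [Filter.Eventually, Ultrafilter.mem_coe] using h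

theorem umap_uadd {H : Type*} [AddSemigroup H] (σ : S → H)
    (hσ : ∀ a b, σ (a + b) = σ a + σ b) (p q : Ultrafilter S) :
    (p + q).map σ = p.map σ + q.map σ := by
  ext s
  simp only [Ultrafilter.mem_map, mem_uadd]
  have hset : σ ⁻¹' {a | {b | a + b ∈ s} ∈ Ultrafilter.map σ q}
      = {a | {b | a + b ∈ σ ⁻¹' s} ∈ q} := by
    ext a
    simp only [Set.mem_preimage, Set.mem_setOf_eq, Ultrafilter.mem_map]
    constructor
    · intro h
      have : σ ⁻¹' {b | σ a + b ∈ s} = {b | a + b ∈ σ ⁻¹' s} := by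
        ext b; simp [hσ]
      rwa [this] at h
    · intro h
      have : σ ⁻¹' {b | σ a + b ∈ s} = {b | a + b ∈ σ ⁻¹' s} := by
        ext b; simp [hσ]
      rwa [this]
  rw [← hset]
  rfl

theorem pure_uadd (a : S) (q : Ultrafilter S) :
    (pure a : Ultrafilter S) + q = q.map (a + ·) := by
  ext s
  simp [mem_uadd, Ultrafilter.mem_map, Set.preimage]

theorem pure_uadd_pure (a b : S) :
    (pure a : Ultrafilter S) + pure b = pure (a + b) := by
  rw [pure_uadd]
  ext s
  simp

theorem continuous_uadd_right (q : Ultrafilter S) :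
    Continuous fun p : Ultrafilter S => p + q :=
  Ultrafilter.continuous_add_left q

theorem continuous_pure_uadd (a : S) :
    Continuous fun q : Ultrafilter S => (pure a : Ultrafilter S) + q := by
  have : (fun q : Ultrafilter S => (pure a : Ultrafilter S) + q)
      = fun q : Ultrafilter S => q.map (a + ·) := by
    funext q; exact pure_uadd a q
  rw [this]
  exact ultrafilterBasis_is_basis.continuous_iff.2 <| fun U hU => by
    obtain ⟨t, rfl⟩ := hU
    have : (Ultrafilter.map (a + ·) ⁻¹' {u : Ultrafilter S | t ∈ u})
        = {u : Ultrafilter S | (a + ·) ⁻¹' t ∈ u} := by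
      ext u; simp [Ultrafilter.mem_map]
    rw [this]
    exact ultrafilter_isOpen_basic _

/-- Continuity of pushforward of ultrafilters. -/
theorem continuous_umap {α β : Type*} (f : α → β) :
    Continuous fun p : Ultrafilter α => p.map f :=
  ultrafilterBasis_is_basis.continuous_iff.2 <| fun U hU => by
    obtain ⟨t, rfl⟩ := hU
    have : (Ultrafilter.map f ⁻¹' {u : Ultrafilter β | t ∈ u})
        = {u : Ultrafilter α | f ⁻¹' t ∈ u} := by
      ext u; simp [Ultrafilter.mem_map]
    rw [this]
    exact ultrafilter_isOpen_basic _

theorem umap_const_zero {H : Type*} [AddZeroClass H] (p : Ultrafilter S) :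
    p.map (fun _ => (0 : H)) = pure 0 := by
  ext s
  simp only [Ultrafilter.mem_map, Ultrafilter.mem_pure]
  by_cases h : (0 : H) ∈ s
  · have hpre : (fun _ : S => (0 : H)) ⁻¹' s = Set.univ := by ext a; simp [h]
    rw [hpre]
    simp only [h, iff_true]
    exact Filter.univ_mem
  · have hpre : (fun _ : S => (0 : H)) ⁻¹' s = ∅ := by ext a; simp [h]
    simp [hpre, h]

theorem uadd_pure_zero {S : Type*} [AddMonoid S] (q : Ultrafilter S) :
    q + (pure 0 : Ultrafilter S) = q := by
  ext s
  simp [mem_uadd]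

theorem pure_zero_uadd {S : Type*} [AddMonoid S] (q : Ultrafilter S) :
    (pure 0 : Ultrafilter S) + q = q := by
  rw [pure_uadd]
  have : ((0 : S) + ·) = id := by funext a; simp
  rw [this, Ultrafilter.map_id]

/-! ### Minimal left ideals -/

/-- `IsLI L` : `L` is a nonempty closed left ideal of `Ultrafilter S`. -/
def IsLI (L : Set (Ultrafilter S)) : Prop :=
  L.Nonempty ∧ IsClosed L ∧ ∀ q : Ultrafilter S, ∀ l ∈ L, q + l ∈ L

theorem isLI_range_add (l : Ultrafilter S) :
    IsLI (Set.range fun q : Ultrafilter S => q + l) := by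
  refine ⟨⟨l + l, ⟨l, rfl⟩⟩, ?_, ?_⟩
  · have : IsCompact (Set.range fun q : Ultrafilter S => q + l) := by
      have := (isCompact_univ (X := Ultrafilter S)).image (continuous_uadd_right l)
      simpa [Set.image_univ] using this
    exact this.isClosed
  · rintro q _ ⟨r, rfl⟩
    exact ⟨q + r, (add_assoc q r l)⟩

/-- Every nonempty closed left ideal contains a minimal one; minimality is
used through the property `∀ l m ∈ L, ∃ q, q + l = m`. -/
theorem exists_minimal_LI (L₀ : Set (Ultrafilter S)) (h₀ : IsLI L₀) :
    ∃ L ⊆ L₀, IsLI L ∧ ∀ l ∈ L, ∀ m ∈ L, ∃ q, q + l = m := by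
  obtain ⟨L, hL₀, hLmin⟩ :=
    zorn_superset_nonempty {A | A ⊆ L₀ ∧ IsLI A}
      (fun c hc hchain hcne => by
        refine ⟨⋂₀ c, ⟨?_, ?_, ?_, ?_⟩, fun s hs => Set.sInter_subset_of_mem hs⟩
        · obtain ⟨A, hA⟩ := hcne
          exact (Set.sInter_subset_of_mem hA).trans (hc hA).1
        · haveI : Nonempty c := hcne.to_subtype
          apply IsCompact.nonempty_sInter_of_directed_nonempty_isCompact_isClosed
          · exact IsChain.directedOn hchain.symm
          · exact fun U hU => (hc hU).2.1
          · exact fun U hU => (hc hU).2.2.1.isCompact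
          · exact fun U hU => (hc hU).2.2.1
        · exact isClosed_sInter fun U hU => (hc hU).2.2.1
        · intro q l hl
          exact Set.mem_sInter.2 fun U hU => (hc hU).2.2.2 q l (Set.mem_sInter.1 hl U hU))
      L₀ ⟨Set.Subset.rfl, h₀⟩
  refine ⟨L, hLmin.prop.1, hLmin.prop.2, ?_⟩
  intro l hl m hm
  have hsub : (Set.range fun q : Ultrafilter S => q + l) ⊆ L := by
    rintro _ ⟨q, rfl⟩
    exact hLmin.prop.2.2.2 q l hl
  have : (Set.range fun q : Ultrafilter S => q + l) = L := by
    have hmem : (Set.range fun q : Ultrafilter S => q + l) ∈ {A | A ⊆ L₀ ∧ IsLI A} :=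
      ⟨hsub.trans hLmin.prop.1, isLI_range_add l⟩
    exact (hLmin.eq_of_superset hmem hsub).symm
  rw [← this] at hm
  obtain ⟨q, hq⟩ := hm
  exact ⟨q, hq⟩

theorem exists_idem (L : Set (Ultrafilter S)) (hne : L.Nonempty) (hcl : IsClosed L)
    (hadd : ∀ a ∈ L, ∀ b ∈ L, a + b ∈ L) : ∃ u ∈ L, u + u = u :=
  exists_idempotent_in_compact_add_subsemigroup
    (fun r => Ultrafilter.continuous_add_left r) L hne hcl.isCompact hadd

end Semigroup

/-! ### Ultrafilter limits of orbits in a compact metric space -/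

section Dynamics

variable {X : Type*} [MetricSpace X] [CompactSpace X] (T : X ≃ₜ X)

/-- The `ℤ`-action generated by `T`. -/
def act (n : ℤ) (x : X) : X := (T.toEquiv ^ n) x

theorem act_zero (x : X) : act T 0 x = x := rfl

theorem act_add (a b : ℤ) (x : X) : act T (a + b) x = act T a (act T b x) := by
  unfold act
  rw [zpow_add]
  rfl

theorem continuous_act (n : ℤ) : Continuous (act T n) := by
  have hpow : ∀ (S : X ≃ₜ X) (k : ℕ), Continuous fun x => (S.toEquiv ^ k) x := by
    intro S k
    induction k with
    | zero => simpa using continuous_id'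
    | succ k ih =>
      have : (fun x => (S.toEquiv ^ (k + 1)) x) = fun x => (S.toEquiv ^ k) (S x) := by
        funext x; rw [pow_succ]; rfl
      rw [this]
      exact ih.comp S.continuous
  unfold act
  cases n with
  | ofNat k => simpa using hpow T k
  | negSucc k =>
    have h1 : (T.toEquiv ^ (Int.negSucc k)) = (T.symm.toEquiv ^ (k + 1)) := by
      rw [zpow_negSucc, ← inv_pow]
      rfl
    rw [h1]
    exact hpow T.symm (k + 1)

/-- Limit of the orbit `n ↦ T^n x` along the ultrafilter `p`. -/
noncomputable def ulim (p : Ultrafilter ℤ) (x : X) : X :=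
  (p.map fun n => act T n x).lim

theorem ulim_spec (p : Ultrafilter ℤ) (x : X) :
    Tendsto (fun n => act T n x) ↑p (𝓝 (ulim T p x)) := by
  have := Ultrafilter.le_nhds_lim (p.map fun n => act T n x)
  rwa [Ultrafilter.coe_map] at this

theorem ulim_eq {p : Ultrafilter ℤ} {x y : X}
    (h : Tendsto (fun n => act T n x) ↑p (𝓝 y)) : ulim T p x = y :=
  tendsto_nhds_unique (ulim_spec T p x) h

theorem ulim_mem {p : Ultrafilter ℤ} {x : X} {V : Set X} (hV : IsOpen V)
    (h : ulim T p x ∈ V) : {n | act T n x ∈ V} ∈ p :=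
  ulim_spec T p x (hV.mem_nhds h)

theorem ulim_pure (n : ℤ) (x : X) : ulim T (pure n) x = act T n x := by
  apply ulim_eq
  rw [Ultrafilter.coe_pure, tendsto_pure_left]
  exact fun s hs => mem_of_mem_nhds hs

theorem ulim_uadd (p q : Ultrafilter ℤ) (x : X) :
    ulim T (p + q) x = ulim T p (ulim T q x) := by
  apply ulim_eq
  set w := ulim T q x
  set y := ulim T p w
  rw [Metric.tendsto_nhds]
  intro ε hε
  have hball : {a | act T a w ∈ Metric.ball y ε} ∈ p :=
    ulim_mem T Metric.isOpen_ball (Metric.mem_ball_self hε)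
  have hsub : {a | act T a w ∈ Metric.ball y ε}
      ⊆ {a | {b | act T (a + b) x ∈ Metric.ball y ε} ∈ q} := by
    intro a ha
    have hopen : IsOpen ((act T a) ⁻¹' Metric.ball y ε) :=
      (continuous_act T a).isOpen_preimage _ Metric.isOpen_ball
    have hmem : w ∈ (act T a) ⁻¹' Metric.ball y ε := ha
    have := ulim_mem T hopen hmem
    apply Filter.mem_of_superset this
    intro b hb
    simpa [act_add] using hb
  have key : {n | act T n x ∈ Metric.ball y ε} ∈ p + q :=
    mem_uadd.2 (Filter.mem_of_superset hball hsub)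
  exact Filter.eventually_iff.mpr key

theorem continuous_ulim (x : X) : Continuous fun p : Ultrafilter ℤ => ulim T p x := by
  rw [continuous_iff_continuousAt]
  intro p₀
  rw [ContinuousAt, Metric.tendsto_nhds]
  intro ε hε
  set y₀ := ulim T p₀ x
  have hA : {n | act T n x ∈ Metric.ball y₀ (ε / 2)} ∈ p₀ :=
    ulim_mem T Metric.isOpen_ball (Metric.mem_ball_self (by linarith))
  have hopen : IsOpen {q : Ultrafilter ℤ | {n | act T n x ∈ Metric.ball y₀ (ε / 2)} ∈ q} :=
    ultrafilter_isOpen_basic _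
  refine Filter.eventually_iff.mpr (mem_of_superset (hopen.mem_nhds hA) ?_)
  intro q hq
  have hclose : ulim T q x ∈ closure (Metric.ball y₀ (ε / 2)) := by
    rw [mem_closure_iff]
    intro V hV hVmem
    have h1 : {n | act T n x ∈ V} ∈ q := ulim_mem T hV hVmem
    have h2 := (q.toFilter.inter_sets h1 hq)
    obtain ⟨n, hn1, hn2⟩ := q.nonempty_of_mem h2
    exact ⟨act T n x, hn1, hn2⟩
  have : ulim T q x ∈ Metric.closedBall y₀ (ε / 2) :=
    Metric.closure_ball_subset_closedBall hclose
  have hd : dist (ulim T q x) y₀ ≤ ε / 2 := Metric.mem_closedBall.1 this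
  simp only [Set.mem_setOf_eq]
  linarith

/-- In a minimal system, every point can be steered to every other point by an
ultrafilter limit. -/
theorem exists_ulim_eq
    (hmin : ∀ x : X, Dense {y : X | ∃ n : ℤ, y = (T.toEquiv ^ n) x})
    (y x' : X) : ∃ q : Ultrafilter ℤ, ulim T q y = x' := by
  set h : ℤ → X := fun n => act T n y
  have hne : NeBot (Filter.comap h (𝓝 x')) := by
    rw [Filter.comap_neBot_iff]
    intro t ht
    obtain ⟨V, hVsub, hVopen, hVmem⟩ := mem_nhds_iff.1 ht
    have hdense := hmin y
    obtain ⟨z, hz1, hz2⟩ := hdense.exists_mem_open hVopen ⟨x', hVmem⟩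
    obtain ⟨n, rfl⟩ := hz1
    exact ⟨n, hVsub hz2⟩
  refine ⟨Ultrafilter.of (Filter.comap h (𝓝 x')), ?_⟩
  apply ulim_eq
  calc Filter.map h ↑(Ultrafilter.of (Filter.comap h (𝓝 x')))
      ≤ Filter.map h (Filter.comap h (𝓝 x')) := Filter.map_mono (Ultrafilter.of_le _)
    _ ≤ 𝓝 x' := Filter.map_comap_le

end Dynamics


/-! ### The face homomorphisms and the tensor ultrafilter -/

section Faces

variable {d : ℕ}

/-- The face-sum homomorphism attached to a vertex `ε` of the cube. -/
def σf (ε : Fin d → Bool) (n : Fin d → ℤ) : ℤ := ∑ i, if ε i then n i else 0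

theorem σf_add (ε : Fin d → Bool) (a b : Fin d → ℤ) :
    σf ε (a + b) = σf ε a + σf ε b := by
  unfold σf
  rw [← Finset.sum_add_distrib]
  congr 1
  funext i
  by_cases h : ε i <;> simp [h]

theorem σf_zero (ε : Fin d → Bool) : σf ε (0 : Fin d → ℤ) = 0 := by
  unfold σf; simp

theorem σf_single [DecidableEq (Fin d)] (ε : Fin d → Bool) (i : Fin d) (z : ℤ) :
    σf ε (Pi.single i z) = if ε i then z else 0 := by
  unfold σf
  rw [Finset.sum_eq_single i]
  · simp
  · intro j _ hji
    simp [Pi.single_eq_of_ne hji]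
  · intro h; exact absurd (Finset.mem_univ i) h

/-- If `ε` has no `true` coordinate, `σf ε` is the zero map. -/
theorem σf_of_not_exists {ε : Fin d → Bool} (hε : ¬∃ i, ε i = true) :
    σf ε = fun _ => (0 : ℤ) := by
  funext n
  unfold σf
  apply Finset.sum_eq_zero
  intro i _
  have : ε i = false := by
    cases h : ε i
    · rfl
    · exact absurd ⟨i, h⟩ hε
  simp [this]

/-- The (ordered) tensor product of copies of `p` along a list of coordinates. -/
noncomputable def mtl [DecidableEq (Fin d)] (p : Ultrafilter ℤ) : List (Fin d) → Ultrafilter (Fin d → ℤ)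
  | [] => pure 0
  | i :: t => (p.map fun z => Pi.single i z) + mtl p t

theorem mtl_σf [DecidableEq (Fin d)] (p : Ultrafilter ℤ) (hp : p + p = p)
    (l : List (Fin d)) (ε : Fin d → Bool) :
    (mtl p l).map (σf ε) = if ∃ i ∈ l, ε i = true then p else pure 0 := by
  induction l with
  | nil =>
    rw [show mtl p ([] : List (Fin d)) = pure 0 from rfl, Ultrafilter.map_pure, σf_zero]
    simp
  | cons i t ih =>
    rw [show mtl p (i :: t) = (p.map fun z => Pi.single i z) + mtl p t from rfl,
      umap_uadd (σf ε) (σf_add ε), ih, Ultrafilter.map_map]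
    have hcomp : (σf ε ∘ fun z : ℤ => Pi.single i z) = fun z => if ε i then z else 0 := by
      funext z; simp [Function.comp, σf_single]
    rw [hcomp]
    by_cases hi : ε i = true
    · have h1 : (fun z : ℤ => if ε i then z else 0) = id := by funext z; simp [hi]
      rw [h1, Ultrafilter.map_id]
      have hex : ∃ j ∈ i :: t, ε j = true := ⟨i, List.mem_cons_self, hi⟩
      rw [if_pos hex]
      by_cases ht : ∃ j ∈ t, ε j = true
      · rw [if_pos ht, hp]
      · rw [if_neg ht, uadd_pure_zero]
    · have h1 : (fun z : ℤ => if ε i then z else 0) = fun _ => (0 : ℤ) := by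
        funext z; simp [hi]
      rw [h1, umap_const_zero, pure_zero_uadd]
      have hiff : (∃ j ∈ i :: t, ε j = true) ↔ (∃ j ∈ t, ε j = true) := by
        constructor
        · rintro ⟨j, hj, hje⟩
          rcases List.mem_cons.1 hj with rfl | hjt
          · exact absurd hje hi
          · exact ⟨j, hjt, hje⟩
        · rintro ⟨j, hj, hje⟩; exact ⟨j, List.mem_cons_of_mem i hj, hje⟩
      rw [if_congr hiff rfl rfl]

end Faces

end CubeSyndetic

open CubeSyndetic

theorem cube_return_times_syndetic {X : Type*} [MetricSpace X] [CompactSpace X]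
    (T : X ≃ₜ X)
    (hmin : ∀ x : X, Dense {y : X | ∃ n : ℤ, y = (T.toEquiv ^ n) x})
    (x : X) (U : Set X) (hU : IsOpen U) (hxU : x ∈ U)
    (d : ℕ) (hd : 1 ≤ d) :
    ∃ F : Finset (Fin d → ℤ),
      ∀ m : Fin d → ℤ, ∃ f ∈ F, ∃ s : Fin d → ℤ,
        (∀ ε : Fin d → Bool,
          (T.toEquiv ^ (∑ i, if ε i then s i else 0)) x ∈ U) ∧
        m = s + f := by
  classical
  -- Step 1 : a minimal left ideal L₀ of βℤ and an idempotent p ∈ L₀ fixing x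
  obtain ⟨L₀, -, hL₀LI, hL₀min⟩ :=
    exists_minimal_LI (S := ℤ) Set.univ ⟨⟨pure 0, trivial⟩, isClosed_univ, fun _ _ _ => trivial⟩
  set J : Set (Ultrafilter ℤ) := {q | q ∈ L₀ ∧ ulim T q x = x} with hJdef
  have hJne : J.Nonempty := by
    obtain ⟨ν, hν⟩ := hL₀LI.1
    obtain ⟨q, hq⟩ := exists_ulim_eq T hmin (ulim T ν x) x
    refine ⟨q + ν, hL₀LI.2.2 q ν hν, ?_⟩
    rw [ulim_uadd, hq]
  have hJclosed : IsClosed J := by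
    have h : J = L₀ ∩ ((fun q => ulim T q x) ⁻¹' {x}) := by
      ext q; simp [hJdef]
    rw [h]
    exact hL₀LI.2.1.inter ((isClosed_singleton).preimage (continuous_ulim T x))
  have hJadd : ∀ a ∈ J, ∀ b ∈ J, a + b ∈ J := by
    rintro a ⟨haL, hax⟩ b ⟨hbL, hbx⟩
    exact ⟨hL₀LI.2.2 a b hbL, by rw [ulim_uadd, hbx, hax]⟩
  obtain ⟨p, hpJ, hpidem⟩ := exists_idem J hJne hJclosed hJadd
  have hpL₀ : p ∈ L₀ := hpJ.1
  have hpx : ulim T p x = x := hpJ.2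
  -- Step 2 : absorption : p + c = p for any idempotent c ∈ L₀
  have habsorb : ∀ c ∈ L₀, c + c = c → p + c = p := by
    intro c hc hcc
    obtain ⟨q, hq⟩ := hL₀min c hc p hpL₀
    calc p + c = q + c + c := by rw [hq]
      _ = q + (c + c) := add_assoc q c c
      _ = q + c := by rw [hcc]
      _ = p := hq
  -- Step 3 : the left ideal 𝔏 of ultrafilters with all nonzero face
  -- projections in L₀, a minimal left ideal LL inside it, an idempotent u ∈ LL
  set BL : Set (Ultrafilter (Fin d → ℤ)) :=
    {w | ∀ ε : Fin d → Bool, (∃ i, ε i = true) → w.map (σf ε) ∈ L₀} with hBLdef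
  have hBLLI : IsLI BL := by
    refine ⟨⟨mtl p (List.finRange d), ?_⟩, ?_, ?_⟩
    · intro ε hε
      obtain ⟨i, hi⟩ := hε
      rw [mtl_σf p hpidem]
      have hex : ∃ j ∈ List.finRange d, ε j = true := ⟨i, List.mem_finRange i, hi⟩
      rw [if_pos hex]
      exact hpL₀
    · have h : BL = ⋂ (ε : {ε : Fin d → Bool // ∃ i, ε i = true}),
          (fun w : Ultrafilter (Fin d → ℤ) => w.map (σf ε.1)) ⁻¹' L₀ := by
        ext w
        simp only [hBLdef, Set.mem_setOf_eq, Set.mem_iInter, Set.mem_preimage, Subtype.forall]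
      rw [h]
      exact isClosed_iInter fun ε => hL₀LI.2.1.preimage (continuous_umap _)
    · intro q l hl ε hε
      rw [umap_uadd (σf ε) (σf_add ε)]
      exact hL₀LI.2.2 _ _ (hl ε hε)
  obtain ⟨LL, hLLsub, hLLLI, hLLmin⟩ := exists_minimal_LI BL hBLLI
  obtain ⟨u, huLL, huidem⟩ :=
    exists_idem LL hLLLI.1 hLLLI.2.1 (fun a _ b hb => hLLLI.2.2 a b hb)
  -- Step 4 : the witness w = mtl + u fixes the cube point
  set w : Ultrafilter (Fin d → ℤ) := mtl p (List.finRange d) + u with hwdef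
  have hwLL : w ∈ LL := hLLLI.2.2 _ u huLL
  have hwfix : ∀ ε : Fin d → Bool, ulim T (w.map (σf ε)) x = x := by
    intro ε
    by_cases hε : ∃ i, ε i = true
    · have hc : (u.map (σf ε)) ∈ L₀ := hLLsub huLL ε hε
      have hcc : (u.map (σf ε)) + (u.map (σf ε)) = u.map (σf ε) := by
        rw [← umap_uadd (σf ε) (σf_add ε), huidem]
      have hwσ : w.map (σf ε) = p := by
        rw [hwdef, umap_uadd (σf ε) (σf_add ε), mtl_σf p hpidem]
        have hex : ∃ j ∈ List.finRange d, ε j = true := by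
          obtain ⟨i, hi⟩ := hε; exact ⟨i, List.mem_finRange i, hi⟩
        rw [if_pos hex]
        exact habsorb _ hc hcc
      rw [hwσ, hpx]
    · rw [σf_of_not_exists hε, umap_const_zero, ulim_pure, act_zero]
  -- Step 5 : the open cover of LL and compactness
  set O : (Fin d → ℤ) → Set (Ultrafilter (Fin d → ℤ)) := fun n =>
    {q | ∀ ε : Fin d → Bool,
      ulim T (((pure n : Ultrafilter (Fin d → ℤ)) + q).map (σf ε)) x ∈ U} with hOdef
  have hOopen : ∀ n, IsOpen (O n) := by
    intro n
    have h : O n = ⋂ ε : Fin d → Bool,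
        (fun q : Ultrafilter (Fin d → ℤ) =>
          ulim T (((pure n : Ultrafilter (Fin d → ℤ)) + q).map (σf ε)) x) ⁻¹' U := by
      ext q; simp [hOdef, Set.mem_iInter]
    rw [h]
    refine isOpen_iInter_of_finite fun ε => ?_
    exact hU.preimage
      ((continuous_ulim T x).comp ((continuous_umap (σf ε)).comp (continuous_pure_uadd n)))
  have hcover : LL ⊆ ⋃ n : (Fin d → ℤ), O n := by
    intro q hq
    obtain ⟨r, hr⟩ := hLLmin q hq w hwLL
    set Os : Set (Ultrafilter (Fin d → ℤ)) :=
      {r' | ∀ ε : Fin d → Bool, ulim T ((r' + q).map (σf ε)) x ∈ U} with hOsdef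
    have hOsopen : IsOpen Os := by
      have h : Os = ⋂ ε : Fin d → Bool,
          (fun r' : Ultrafilter (Fin d → ℤ) => ulim T ((r' + q).map (σf ε)) x) ⁻¹' U := by
        ext r'; simp [hOsdef, Set.mem_iInter]
      rw [h]
      refine isOpen_iInter_of_finite fun ε => ?_
      exact hU.preimage
        ((continuous_ulim T x).comp ((continuous_umap (σf ε)).comp (continuous_uadd_right q)))
    have hrOs : r ∈ Os := by
      intro ε
      rw [hr, hwfix ε]
      exact hxU
    obtain ⟨n, hn⟩ := denseRange_pure.exists_mem_open hOsopen ⟨r, hrOs⟩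
    exact Set.mem_iUnion.2 ⟨n, hn⟩
  obtain ⟨t, ht⟩ := (hLLLI.2.1.isCompact).elim_finite_subcover O hOopen hcover
  -- Step 6 : conclusion
  refine ⟨t.image (fun n => -n), ?_⟩
  intro m
  have hm : (pure m : Ultrafilter (Fin d → ℤ)) + w ∈ LL := hLLLI.2.2 _ w hwLL
  obtain ⟨n, hnt, hnO⟩ := Set.mem_iUnion₂.1 (ht hm)
  refine ⟨-n, Finset.mem_image_of_mem _ hnt, n + m, ?_, ?_⟩
  · intro ε
    have hcond := hnO ε
    have heq : (pure n : Ultrafilter (Fin d → ℤ)) + ((pure m : Ultrafilter (Fin d → ℤ)) + w)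
        = (pure (n + m) : Ultrafilter (Fin d → ℤ)) + w := by
      rw [← add_assoc, pure_uadd_pure]
    rw [heq] at hcond
    have hcomp : ulim T (((pure (n + m) : Ultrafilter (Fin d → ℤ)) + w).map (σf ε)) x
        = act T (σf ε (n + m)) x := by
      rw [umap_uadd (σf ε) (σf_add ε), Ultrafilter.map_pure, ulim_uadd, hwfix ε, ulim_pure]
    rw [hcomp] at hcond
    exact hcond
  · funext i
    simp [add_comm]
end

section
/- Let (X,T) be a dynamical system and d ≥ 1. The dynamical parallelepiped set Q^[d](X) is invariant under the Euclidean permutations of X^{2^d}, i.e., under the coordinate permutations of {0,1}^d induced by permuting the d digits and by flipping any digit (0 ↔ 1 in a fixed coordinate). -/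
/-- The dynamical parallelepiped set `Q^[d](X)`. -/
def Qcube {X : Type*} [TopologicalSpace X] (T : X ≃ₜ X) (d : ℕ) :
    Set ((Fin d → Bool) → X) :=
  closure {y | ∃ (x : X) (n : Fin d → ℤ),
    y = fun ε => (T.toEquiv ^ (∑ i, if ε i then n i else 0)) x}

theorem Qcube_euclidean_invariant {X : Type*} [MetricSpace X] [CompactSpace X]
    (T : X ≃ₜ X) (d : ℕ) (hd : 1 ≤ d) :
    (∀ σ : Equiv.Perm (Fin d), ∀ y ∈ Qcube T d,
      (fun ε : Fin d → Bool => y (fun i => ε (σ i))) ∈ Qcube T d) ∧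
    (∀ j : Fin d, ∀ y ∈ Qcube T d,
      (fun ε : Fin d → Bool => y (fun i => if i = j then !ε i else ε i)) ∈ Qcube T d) := by
  constructor
  · intro σ y hy
    have hcont : Continuous (fun y : (Fin d → Bool) → X =>
        fun ε : Fin d → Bool => y (fun i => ε (σ i))) :=
      continuous_pi fun ε => continuous_apply _
    refine map_mem_closure hcont hy ?_
    rintro z ⟨x, n, rfl⟩
    refine ⟨x, fun i => n (σ.symm i), ?_⟩
    funext ε
    show (T.toEquiv ^ _) x = (T.toEquiv ^ _) x
    exact congrArg (fun k => (T.toEquiv ^ k) x) (Fintype.sum_equiv σ (fun i => if ε (σ i) then n i else 0)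
      (fun i => if ε i then n (σ.symm i) else 0)
      (fun i => by simp))
  · intro j y hy
    have hcont : Continuous (fun y : (Fin d → Bool) → X =>
        fun ε : Fin d → Bool => y (fun i => if i = j then !ε i else ε i)) :=
      continuous_pi fun ε => continuous_apply _
    refine map_mem_closure hcont hy ?_
    rintro z ⟨x, n, rfl⟩
    refine ⟨(T.toEquiv ^ (n j)) x, fun i => if i = j then -n i else n i, ?_⟩
    funext ε
    show (T.toEquiv ^ _) x = (T.toEquiv ^ _) _
    rw [← Equiv.Perm.mul_apply, ← zpow_add]
    congr 1
    have h1 : (∑ i, if ε i then (if i = j then -n i else n i) else 0) + n j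
        = ∑ i, ((if ε i then (if i = j then -n i else n i) else 0)
            + (if i = j then n i else 0)) := by
      rw [Finset.sum_add_distrib]
      congr 1
      simp
    rw [h1]
    congr 1
    apply Finset.sum_congr rfl
    intro i _
    by_cases h : i = j
    · subst h
      rcases Bool.eq_false_or_eq_true (ε i) with h' | h' <;> simp [h']
    · simp [h]
end

section
/- Let (X,T) be a minimal dynamical system and d ≥ 1. Assume: (a) for every x ∈ X, the orbit closure of x^[d+1] = (x,...,x) under the face group F^[d+1] is an F^[d+1]-minimal set; and (b) for every x, it is the unique F^[d+1]-minimal subset of Q^[d+1][x] = {z ∈ Q^[d+1](X) : z_∅ = x}; and (c) (x,y) ∈ RP^[d](X) iff (x, y, ..., y) (x in first coordinate, y elsewhere) lies in the F^[d+1]-orbit closure of x^[d+1]. Then RP^[d](X) is transitive: (x,y) ∈ RP^[d] and (y,z) ∈ RP^[d] imply (x,z) ∈ RP^[d]. -/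
/-- The `j`-th face transformation of the cube space `X^{2^d}`. -/
def faceEquiv {X : Type*} (T : X ≃ X) (d : ℕ) (j : Fin d) :
    Equiv.Perm ((Fin d → Bool) → X) :=
  Equiv.piCongrRight (fun ε : Fin d → Bool => if ε j then T else Equiv.refl X)

/-- The face group `F^[d]`: the group generated by the face transformations. -/
def faceGroup {X : Type*} (T : X ≃ X) (d : ℕ) :
    Subgroup (Equiv.Perm ((Fin d → Bool) → X)) :=
  Subgroup.closure {g | ∃ j : Fin d, g = faceEquiv T d j}

/-- The orbit closure of a point of the cube space under the face group. -/
def faceOrbitClosure {X : Type*} [TopologicalSpace X] (T : X ≃ₜ X) (d : ℕ)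
    (z : (Fin d → Bool) → X) : Set ((Fin d → Bool) → X) :=
  closure {w | ∃ g ∈ faceGroup T.toEquiv d, w = g z}

/-- `M` is a minimal set for the action of the face group `F^[d]`. -/
def FaceMinimal {X : Type*} [TopologicalSpace X] (T : X ≃ₜ X) (d : ℕ)
    (M : Set ((Fin d → Bool) → X)) : Prop :=
  M.Nonempty ∧ IsClosed M ∧ (∀ g ∈ faceGroup T.toEquiv d, ∀ w ∈ M, g w ∈ M) ∧
  ∀ M' ⊆ M, M'.Nonempty → IsClosed M' →
    (∀ g ∈ faceGroup T.toEquiv d, ∀ w ∈ M', g w ∈ M') → M' = M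


lemma faceGroup_coeff {X : Type*} (T : X ≃ X) (d : ℕ)
    (g : Equiv.Perm ((Fin d → Bool) → X)) (hg : g ∈ faceGroup T d) :
    ∃ c : (Fin d → Bool) → ℤ, c (fun _ => false) = 0 ∧
      ∀ (w : (Fin d → Bool) → X) (ε : Fin d → Bool), g w ε = (T ^ c ε) (w ε) := by
  induction hg using Subgroup.closure_induction with
  | mem g hg =>
      obtain ⟨j, rfl⟩ := hg
      refine ⟨fun ε => if ε j then 1 else 0, by simp, ?_⟩
      intro w ε
      by_cases h : ε j <;> simp [faceEquiv, h, Equiv.piCongrRight]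
  | one => exact ⟨0, rfl, by simp⟩
  | mul g h _ _ ihg ihh =>
      obtain ⟨c, hc0, hc⟩ := ihg
      obtain ⟨e, he0, he⟩ := ihh
      refine ⟨c + e, by simp [hc0, he0], fun w ε => ?_⟩
      have h1 : (g * h) w = g (h w) := rfl
      rw [h1, hc, he, ← Equiv.Perm.mul_apply, ← zpow_add]
      simp [add_comm]
  | inv g _ ih =>
      obtain ⟨c, hc0, hc⟩ := ih
      refine ⟨-c, by simp [hc0], fun w ε => ?_⟩
      have h1 : g (fun ε => (T ^ (-(c ε))) (w ε)) = w := by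
        funext ε
        rw [hc]
        rw [← Equiv.Perm.mul_apply, ← zpow_add]
        simp
      conv_lhs => rw [← h1]
      simp

theorem RP_transitive {X : Type*} [MetricSpace X] [CompactSpace X]
    (T : X ≃ₜ X)
    (hmin : ∀ x : X, Dense {y : X | ∃ n : ℤ, y = (T.toEquiv ^ n) x})
    (d : ℕ) (hd : 1 ≤ d)
    (ha : ∀ x : X, FaceMinimal T (d + 1)
      (faceOrbitClosure T (d + 1) (fun _ => x)))
    (hb : ∀ x : X, ∀ M : Set ((Fin (d + 1) → Bool) → X),
      M ⊆ {z ∈ Qcube T (d + 1) | z (fun _ => false) = x} →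
      FaceMinimal T (d + 1) M →
      M = faceOrbitClosure T (d + 1) (fun _ => x))
    (hc : ∀ x y : X, (x, y) ∈ RP T d ↔
      (fun ε : Fin (d + 1) → Bool => if ε = (fun _ => false) then x else y) ∈
        faceOrbitClosure T (d + 1) (fun _ => x)) :
    ∀ x y z : X, (x, y) ∈ RP T d → (y, z) ∈ RP T d → (x, z) ∈ RP T d := by
  intro x y z hxy hyz
  rw [hc] at hxy hyz ⊢
  -- The closed, invariant orbit closure of the diagonal point of x
  obtain ⟨-, hAclosed, hAinv, -⟩ := ha x
  set A := faceOrbitClosure T (d + 1) (fun _ => x) with hA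
  -- The orbit of P(x,y) is contained in A
  have horb : {w | ∃ g ∈ faceGroup T.toEquiv (d + 1),
      w = g (fun ε : Fin (d + 1) → Bool => if ε = (fun _ => false) then x else y)} ⊆ A := by
    rintro w ⟨g, hg, rfl⟩
    exact hAinv g hg _ hxy
  have hcl : closure {w | ∃ g ∈ faceGroup T.toEquiv (d + 1),
      w = g (fun ε : Fin (d + 1) → Bool => if ε = (fun _ => false) then x else y)} ⊆ A :=
    closure_minimal horb hAclosed
  -- The continuous map replacing the ∅ coordinate with x
  set Φ : ((Fin (d + 1) → Bool) → X) → ((Fin (d + 1) → Bool) → X) :=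
    fun w ε => if ε = (fun _ => false) then x else w ε with hΦ
  have hΦcont : Continuous Φ := by
    refine continuous_pi fun ε => ?_
    by_cases h : ε = (fun _ => false)
    · simpa [hΦ, h] using (continuous_const : Continuous fun _ : (Fin (d+1) → Bool) → X => x)
    · simpa [hΦ, h] using continuous_apply ε
  -- Φ maps the orbit of y^[d+1] into the orbit of P(x,y)
  have hmap : Φ '' {w | ∃ g ∈ faceGroup T.toEquiv (d + 1), w = g (fun _ => y)} ⊆
      {w | ∃ g ∈ faceGroup T.toEquiv (d + 1),
        w = g (fun ε : Fin (d + 1) → Bool => if ε = (fun _ => false) then x else y)} := by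
    rintro _ ⟨w, ⟨g, hg, rfl⟩, rfl⟩
    refine ⟨g, hg, ?_⟩
    obtain ⟨c, hc0, hcw⟩ := faceGroup_coeff T.toEquiv (d + 1) g hg
    funext ε
    by_cases h : ε = (fun _ => false)
    · simp [hΦ, h, hcw, hc0]
    · simp [hΦ, h, hcw]
  -- conclude: P(x,z) = Φ (P(y,z)) ∈ A
  have hΦP : Φ (fun ε : Fin (d + 1) → Bool => if ε = (fun _ => false) then y else z) =
      fun ε : Fin (d + 1) → Bool => if ε = (fun _ => false) then x else z := by
    funext ε
    by_cases h : ε = (fun _ => false) <;> simp [hΦ, h]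
  have hmem : Φ (fun ε : Fin (d + 1) → Bool => if ε = (fun _ => false) then y else z) ∈
      closure {w | ∃ g ∈ faceGroup T.toEquiv (d + 1),
        w = g (fun ε : Fin (d + 1) → Bool => if ε = (fun _ => false) then x else y)} := by
    have h1 : Φ (fun ε : Fin (d + 1) → Bool => if ε = (fun _ => false) then y else z) ∈
        Φ '' closure {w | ∃ g ∈ faceGroup T.toEquiv (d + 1), w = g (fun _ => y)} :=
      Set.mem_image_of_mem _ hyz
    have h2 := image_closure_subset_closure_image (s := {w | ∃ g ∈ faceGroup T.toEquiv (d + 1),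
        w = g (fun _ => y)}) hΦcont
    exact closure_mono hmap (h2 h1)
  have := hcl hmem
  rwa [hΦP] at this
end

section
/- Let (X,T) be a minimal weakly mixing dynamical system on a compact metric space and d ≥ 1. Then for every x ∈ X, the orbit closure of x^[d] = (x,...,x) under the face group F^[d] equals {x} × X^{2^d − 1}, and consequently Q^[d](X) = X^{2^d}. -/
section Alg
variable {X : Type*} (T : X ≃ X) (d : ℕ)

/-- face group element corresponding to `n : Fin d → ℤ`. -/
def Gp (n : Fin d → ℤ) : Equiv.Perm ((Fin d → Bool) → X) :=
  Equiv.piCongrRight fun ε => T ^ (∑ i, if ε i then n i else 0)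

lemma Gp_apply (n : Fin d → ℤ) (w : (Fin d → Bool) → X) (ε : Fin d → Bool) :
    Gp T d n w ε = (T ^ (∑ i, if ε i then n i else 0)) (w ε) := rfl

lemma permPowAdd (S : Equiv.Perm X) (a b : ℤ) (y : X) :
    (S ^ a) ((S ^ b) y) = (S ^ (a + b)) y := by
  rw [zpow_add, Equiv.Perm.mul_apply]

lemma Gp_mul (a b : Fin d → ℤ) : Gp T d a * Gp T d b = Gp T d (a + b) := by
  apply Equiv.ext; intro w; funext ε
  show (T ^ _) ((T ^ _) (w ε)) = (T ^ _) (w ε)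
  rw [permPowAdd]
  have hsum : (∑ i, if ε i then a i else 0) + (∑ i, if ε i then b i else 0)
      = ∑ i, if ε i then (a + b) i else 0 := by
    rw [← Finset.sum_add_distrib]
    apply Finset.sum_congr rfl
    intro i _
    by_cases h : ε i <;> simp [h]
  rw [hsum]

lemma Gp_zero : Gp T d 0 = 1 := by
  apply Equiv.ext; intro w; funext ε
  show (T ^ _) (w ε) = w ε
  simp

lemma Gp_inv (n : Fin d → ℤ) : (Gp T d n)⁻¹ = Gp T d (-n) := by
  apply inv_eq_of_mul_eq_one_right
  rw [Gp_mul, add_neg_cancel, Gp_zero]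

lemma Gp_pow (n : Fin d → ℤ) (k : ℕ) : (Gp T d n) ^ k = Gp T d (k • n) := by
  induction k with
  | zero => rw [pow_zero, zero_smul, Gp_zero]
  | succ k ih => rw [pow_succ, ih, Gp_mul, ← succ_nsmul]

lemma Gp_zpow (n : Fin d → ℤ) (k : ℤ) : (Gp T d n) ^ k = Gp T d (k • n) := by
  cases k with
  | ofNat k => rw [Int.ofNat_eq_coe, zpow_natCast, Gp_pow, natCast_zsmul]
  | negSucc k => rw [zpow_negSucc, Gp_pow, Gp_inv, ← negSucc_zsmul]

end Alg

section Alg2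
variable {X : Type*} (T : X ≃ X) (d : ℕ)

lemma faceEquiv_eq (j : Fin d) : faceEquiv T d j = Gp T d (Pi.single j 1) := by
  apply Equiv.ext; intro w; funext ε
  show (if ε j then T else Equiv.refl X) (w ε) = (T ^ (∑ i, if ε i then Pi.single j (1:ℤ) i else 0)) (w ε)
  have hsum : (∑ i, if ε i then Pi.single j (1:ℤ) i else 0) = if ε j then 1 else 0 := by
    rw [Finset.sum_eq_single j]
    · by_cases h : ε j <;> simp [h]
    · intro i _ hij
      by_cases h : ε i <;> simp [h, Pi.single_eq_of_ne hij]
    · intro h; exact absurd (Finset.mem_univ j) h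
  rw [hsum]
  by_cases h : ε j <;> simp [h]

lemma single_eq_smul (j : Fin d) (k : ℤ) : (k • Pi.single j (1:ℤ) : Fin d → ℤ) = Pi.single j k := by
  funext i
  by_cases h : i = j
  · subst h; simp
  · simp [Pi.single_eq_of_ne h]

lemma Gp_mem (n : Fin d → ℤ) : Gp T d n ∈ faceGroup T d := by
  have key : ∀ s : Finset (Fin d), ∀ n : Fin d → ℤ,
      Gp T d (fun i => if i ∈ s then n i else 0) ∈ faceGroup T d := by
    intro s
    induction s using Finset.induction_on with
    | empty =>
        intro n
        have h : (fun i => if i ∈ (∅ : Finset (Fin d)) then n i else 0) = 0 := by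
          funext i; simp
        rw [h, Gp_zero]; exact one_mem _
    | @insert j s hj ih =>
        intro n
        have hdec : (fun i => if i ∈ insert j s then n i else 0)
            = Pi.single j (n j) + (fun i => if i ∈ s then n i else 0) := by
          funext i
          by_cases hij : i = j
          · subst hij; simp [hj]
          · simp [Finset.mem_insert, hij, Pi.single_eq_of_ne hij]
        rw [hdec, ← Gp_mul]
        refine mul_mem ?_ (ih n)
        have h1 : Gp T d (Pi.single j (n j)) = (faceEquiv T d j) ^ (n j) := by
          rw [faceEquiv_eq, Gp_zpow, single_eq_smul]
        rw [h1]
        refine Subgroup.zpow_mem _ (Subgroup.subset_closure ?_) (n j)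
        exact ⟨j, rfl⟩
  have h2 : (fun i => if i ∈ (Finset.univ : Finset (Fin d)) then n i else 0) = n := by
    funext i; simp
  have := key Finset.univ n
  rwa [h2] at this

lemma mem_faceGroup_exists (g : Equiv.Perm ((Fin d → Bool) → X)) (hg : g ∈ faceGroup T d) :
    ∃ m : Fin d → ℤ, g = Gp T d m := by
  induction hg using Subgroup.closure_induction with
  | mem g hgk => obtain ⟨j, rfl⟩ := hgk; exact ⟨Pi.single j 1, faceEquiv_eq T d j⟩
  | one => exact ⟨0, (Gp_zero T d).symm⟩
  | mul a b ha hb iha ihb =>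
      obtain ⟨ma, rfl⟩ := iha; obtain ⟨mb, rfl⟩ := ihb
      exact ⟨ma + mb, Gp_mul T d ma mb⟩
  | inv a ha iha =>
      obtain ⟨ma, rfl⟩ := iha
      exact ⟨-ma, Gp_inv T d ma⟩

end Alg2

set_option linter.unusedSectionVars false
section Dyn
variable {X : Type*} [MetricSpace X] [CompactSpace X] (T : X ≃ₜ X)

lemma contPowNat (S : X ≃ₜ X) (k : ℕ) : Continuous fun x => (S.toEquiv ^ k) x := by
  induction k with
  | zero => simpa using continuous_id'
  | succ k ih =>
      have h : (fun x => (S.toEquiv ^ (k+1)) x) = fun x => (S.toEquiv ^ k) (S x) := by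
        funext x; rw [pow_succ, Equiv.Perm.mul_apply]; rfl
      rw [h]; exact ih.comp S.continuous

lemma contPow (n : ℤ) : Continuous fun x => (T.toEquiv ^ n) x := by
  cases n with
  | ofNat k => simpa [zpow_natCast] using contPowNat T k
  | negSucc k =>
      have h : T.toEquiv ^ (Int.negSucc k) = T.symm.toEquiv ^ (k+1) := by
        rw [zpow_negSucc, ← inv_pow]; rfl
      rw [h]; exact contPowNat T.symm (k+1)

lemma permPowAdd' (S : Equiv.Perm X) (a b : ℤ) (y : X) :
    (S ^ a) ((S ^ b) y) = (S ^ (a + b)) y := by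
  rw [zpow_add, Equiv.Perm.mul_apply]

/-- The Furstenberg intersection trick for a weakly mixing system. -/
lemma pairLemma (hwm : WeaklyMixing T) {U V U' V' : Set X}
    (hUo : IsOpen U) (hVo : IsOpen V) (hU'o : IsOpen U') (hV'o : IsOpen V')
    (hUn : U.Nonempty) (hVn : V.Nonempty) (hU'n : U'.Nonempty) (hV'n : V'.Nonempty) :
    ∃ U'' V'' : Set X, IsOpen U'' ∧ U''.Nonempty ∧ IsOpen V'' ∧ V''.Nonempty ∧
      ∀ n : ℤ, (∃ y ∈ U'', (T.toEquiv ^ n) y ∈ V'') →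
        (∃ y ∈ U, (T.toEquiv ^ n) y ∈ V) ∧ (∃ y ∈ U', (T.toEquiv ^ n) y ∈ V') := by
  obtain ⟨m, p, hp1, hp2⟩ := hwm (U ×ˢ V) (U' ×ˢ V') (hUo.prod hVo) (hU'o.prod hV'o)
    (hUn.prod hVn) (hU'n.prod hV'n)
  obtain ⟨⟨a, b⟩, hab, rfl⟩ := hp1
  have haU : a ∈ U := hab.1
  have hbV : b ∈ V := hab.2
  have haU' : (T.toEquiv ^ m) a ∈ U' := hp2.1
  have hbV' : (T.toEquiv ^ m) b ∈ V' := hp2.2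
  refine ⟨U ∩ (fun y => (T.toEquiv ^ m) y) ⁻¹' U', V ∩ (fun y => (T.toEquiv ^ m) y) ⁻¹' V',
    hUo.inter (hU'o.preimage (contPow T m)), ⟨a, haU, haU'⟩,
    hVo.inter (hV'o.preimage (contPow T m)), ⟨b, hbV, hbV'⟩, ?_⟩
  rintro n ⟨y, ⟨hyU, hyU'⟩, hzV, hzV'⟩
  refine ⟨⟨y, hyU, hzV⟩, ⟨(T.toEquiv ^ m) y, hyU', ?_⟩⟩
  rw [permPowAdd', add_comm, ← permPowAdd']
  exact hzV'

lemma fip (hmin : ∀ x : X, Dense {y : X | ∃ n : ℤ, y = (T.toEquiv ^ n) x})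
    (hwm : WeaklyMixing T) [Nonempty X] {ι : Type} [Fintype ι] (U V : ι → Set X)
    (hUo : ∀ i, IsOpen (U i)) (hUn : ∀ i, (U i).Nonempty)
    (hVo : ∀ i, IsOpen (V i)) (hVn : ∀ i, (V i).Nonempty) :
    ∃ n : ℤ, ∀ i, ∃ y ∈ U i, (T.toEquiv ^ n) y ∈ V i := by
  have key : ∀ s : Finset ι, ∃ U' V' : Set X,
      IsOpen U' ∧ U'.Nonempty ∧ IsOpen V' ∧ V'.Nonempty ∧
      ∀ n : ℤ, (∃ y ∈ U', (T.toEquiv ^ n) y ∈ V') →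
        ∀ i ∈ s, ∃ y ∈ U i, (T.toEquiv ^ n) y ∈ V i := by
    intro s
    classical
    induction s using Finset.induction_on with
    | empty =>
        exact ⟨Set.univ, Set.univ, isOpen_univ, Set.univ_nonempty, isOpen_univ,
          Set.univ_nonempty, fun n _ i hi => absurd hi (Finset.notMem_empty i)⟩
    | @insert j s hj ih =>
        obtain ⟨U', V', hU'o, hU'n, hV'o, hV'n, himp⟩ := ih
        obtain ⟨U'', V'', hU''o, hU''n, hV''o, hV''n, himp2⟩ :=
          pairLemma T hwm (hUo j) (hVo j) hU'o hV'o (hUn j) (hVn j) hU'n hV'n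
        refine ⟨U'', V'', hU''o, hU''n, hV''o, hV''n, fun n hn i hi => ?_⟩
        rcases Finset.mem_insert.mp hi with h | h
        · subst h; exact (himp2 n hn).1
        · exact himp n (himp2 n hn).2 i h
  obtain ⟨U', V', hU'o, ⟨u, hu⟩, hV'o, hV'n, himp⟩ := key Finset.univ
  obtain ⟨z, hzD, hzV⟩ := (hmin u).exists_mem_open hV'o hV'n
  obtain ⟨n, rfl⟩ := hzD
  exact ⟨n, fun i => himp n ⟨u, hu, hzV⟩ i (Finset.mem_univ i)⟩

/-- syndetic ∩ thick : can simultaneously return `x` to `V₀` and move each `U i` into `V i`. -/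
lemma bigLemma (hmin : ∀ x : X, Dense {y : X | ∃ n : ℤ, y = (T.toEquiv ^ n) x})
    (hwm : WeaklyMixing T) [Nonempty X] (x : X) {ι : Type} [Fintype ι] (U V : ι → Set X)
    (hUo : ∀ i, IsOpen (U i)) (hUn : ∀ i, (U i).Nonempty)
    (hVo : ∀ i, IsOpen (V i)) (hVn : ∀ i, (V i).Nonempty)
    (V₀ : Set X) (hV₀o : IsOpen V₀) (hV₀n : V₀.Nonempty) :
    ∃ k : ℤ, (T.toEquiv ^ k) x ∈ V₀ ∧ ∀ i, ∃ y ∈ U i, (T.toEquiv ^ k) y ∈ V i := by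
  have hcov : (Set.univ : Set X) ⊆ ⋃ s : ℤ, (fun y => (T.toEquiv ^ s) y) ⁻¹' V₀ := by
    intro y _
    obtain ⟨z, hzD, hzV⟩ := (hmin y).exists_mem_open hV₀o hV₀n
    obtain ⟨s, rfl⟩ := hzD
    exact Set.mem_iUnion.mpr ⟨s, hzV⟩
  obtain ⟨S, hS⟩ := isCompact_univ.elim_finite_subcover _
    (fun s : ℤ => hV₀o.preimage (contPow T s)) hcov
  obtain ⟨m, hm⟩ := fip T hmin hwm (ι := ι × {s // s ∈ S}) (fun p => U p.1)
    (fun p => (fun y => (T.toEquiv ^ (p.2 : ℤ)) y) ⁻¹' V p.1)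
    (fun p => hUo p.1) (fun p => hUn p.1)
    (fun p => (hVo p.1).preimage (contPow T (p.2 : ℤ)))
    (fun p => by
      obtain ⟨v, hv⟩ := hVn p.1
      exact ⟨(T.toEquiv ^ (p.2 : ℤ)).symm v, by
        simp only [Set.mem_preimage, Equiv.apply_symm_apply]; exact hv⟩)
  have hx := hS (Set.mem_univ ((T.toEquiv ^ m) x))
  obtain ⟨s, hsS, hxs⟩ := Set.mem_iUnion₂.mp hx
  refine ⟨s + m, ?_, fun i => ?_⟩
  · rw [← permPowAdd']; exact hxs
  · obtain ⟨y, hy, hy2⟩ := hm (i, ⟨s, hsS⟩)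
    exact ⟨y, hy, by rw [← permPowAdd']; exact hy2⟩

end Dyn

section Core
variable {X : Type*} [MetricSpace X] [CompactSpace X] (T : X ≃ₜ X)

lemma coreLemma (hmin : ∀ x : X, Dense {y : X | ∃ n : ℤ, y = (T.toEquiv ^ n) x})
    (hwm : WeaklyMixing T) [Nonempty X] :
    ∀ (d : ℕ) (x : X) (V : (Fin d → Bool) → Set X), (∀ ε, IsOpen (V ε)) →
      (∀ ε, (V ε).Nonempty) →
      ∃ n : Fin d → ℤ, ∀ ε, ε ≠ (fun _ => false) →
        (T.toEquiv ^ (∑ i, if ε i then n i else 0)) x ∈ V ε := by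
  intro d
  induction d with
  | zero =>
      intro x V _ _
      exact ⟨0, fun ε hε => absurd (funext fun i => i.elim0) hε⟩
  | succ d ih =>
      intro x V hVo hVn
      classical
      obtain ⟨k, hk0, hk⟩ := bigLemma T hmin hwm x (ι := Fin d → Bool)
        (fun η => V (Fin.snoc η false)) (fun η => V (Fin.snoc η true))
        (fun η => hVo _) (fun η => hVn _) (fun η => hVo _) (fun η => hVn _)
        (V (Fin.snoc (fun _ => false) true)) (hVo _) (hVn _)
      set W : (Fin d → Bool) → Set X := fun η =>
        if η = (fun _ => false) then Set.univ
        else V (Fin.snoc η false) ∩ (fun z => (T.toEquiv ^ k) z) ⁻¹' V (Fin.snoc η true)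
        with hWdef
      have hWo : ∀ η, IsOpen (W η) := by
        intro η
        by_cases h : η = (fun _ => false)
        · rw [hWdef]; simp only [h, if_pos rfl]; exact isOpen_univ
        · rw [hWdef]; simp only [if_neg h]
          exact (hVo _).inter ((hVo _).preimage (contPow T k))
      have hWn : ∀ η, (W η).Nonempty := by
        intro η
        by_cases h : η = (fun _ => false)
        · rw [hWdef]; simp only [if_pos h]; exact Set.univ_nonempty
        · obtain ⟨y, hy1, hy2⟩ := hk η
          rw [hWdef]; simp only [if_neg h]
          exact ⟨y, hy1, hy2⟩
      obtain ⟨m, hm⟩ := ih x W hWo hWn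
      refine ⟨Fin.snoc m k, ?_⟩
      intro ε hε
      have hsum : (∑ i, if ε i then Fin.snoc m k i else 0) =
          (∑ i : Fin d, if Fin.init ε i then m i else 0)
            + (if ε (Fin.last d) then k else 0) := by
        rw [Fin.sum_univ_castSucc]
        congr 1
        · apply Finset.sum_congr rfl
          intro i _
          rw [Fin.snoc_castSucc]
          rfl
        · rw [Fin.snoc_last]
      have hηsnoc : Fin.snoc (Fin.init ε) (ε (Fin.last d)) = ε := Fin.snoc_init_self ε
      by_cases hlast : ε (Fin.last d) = true
      · by_cases hη : Fin.init ε = (fun _ => false)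
        · have hz : (∑ i : Fin d, if Fin.init ε i then m i else 0) = 0 := by
            simp [hη]
          have hεeq := hηsnoc
          rw [hη, hlast] at hεeq
          have hexp : (∑ i, if ε i then Fin.snoc m k i else 0) = k := by
            rw [hsum, hz]; simp [hlast]
          rw [hexp, ← hεeq]
          exact hk0
        · have hmem := hm (Fin.init ε) hη
          rw [hWdef] at hmem; simp only [if_neg hη] at hmem
          have h2 := hmem.2
          rw [Set.mem_preimage, permPowAdd',
            add_comm k (∑ i : Fin d, if Fin.init ε i then m i else 0)] at h2
          have hεeq := hηsnoc
          rw [hlast] at hεeq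
          rw [hεeq] at h2
          have hexp : (∑ i, if ε i then Fin.snoc m k i else 0) =
              (∑ i : Fin d, if Fin.init ε i then m i else 0) + k := by
            rw [hsum]; simp [hlast]
          rw [hexp]
          exact h2
      · have hlastf : ε (Fin.last d) = false := by
          simpa using hlast
        have hη : Fin.init ε ≠ (fun _ => false) := by
          intro h
          apply hε
          rw [← hηsnoc, h, hlastf]
          funext i
          refine Fin.lastCases ?_ ?_ i
          · rw [Fin.snoc_last]
          · intro j; rw [Fin.snoc_castSucc]
        have hmem := hm (Fin.init ε) hη
        rw [hWdef] at hmem; simp only [if_neg hη] at hmem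
        have hεeq := hηsnoc
        rw [hlastf] at hεeq
        have hexp : (∑ i, if ε i then Fin.snoc m k i else 0) =
            (∑ i : Fin d, if Fin.init ε i then m i else 0) := by
          rw [hsum]; simp [hlastf]
        have h1 := hmem.1
        rw [hεeq] at h1
        rw [hexp]
        exact h1

end Core

theorem weakly_mixing_face_orbit_closure {X : Type*} [MetricSpace X] [CompactSpace X]
    (T : X ≃ₜ X)
    (hmin : ∀ x : X, Dense {y : X | ∃ n : ℤ, y = (T.toEquiv ^ n) x})
    (hwm : WeaklyMixing T) (d : ℕ) (hd : 1 ≤ d) :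
    (∀ x : X, faceOrbitClosure T d (fun _ => x) =
      {w : (Fin d → Bool) → X | w (fun _ => false) = x}) ∧
    Qcube T d = Set.univ := by
  classical
  rcases isEmpty_or_nonempty X with hX | hX
  · refine ⟨fun x => (IsEmpty.false x).elim, ?_⟩
    have hE : IsEmpty ((Fin d → Bool) → X) := ⟨fun w => IsEmpty.false (w (fun _ => false))⟩
    rw [Set.eq_empty_of_isEmpty (Qcube T d), Set.eq_empty_of_isEmpty (Set.univ : Set ((Fin d → Bool) → X))]
  · have part1 : ∀ x : X, faceOrbitClosure T d (fun _ => x) =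
        {w : (Fin d → Bool) → X | w (fun _ => false) = x} := by
      intro x
      apply Set.Subset.antisymm
      · apply closure_minimal
        · rintro w ⟨g, hg, rfl⟩
          obtain ⟨m, rfl⟩ := mem_faceGroup_exists T.toEquiv d g hg
          show Gp T.toEquiv d m (fun _ => x) (fun _ => false) = x
          rw [Gp_apply]
          have h0 : (∑ i, if (fun _ : Fin d => false) i then m i else 0) = 0 := by simp
          rw [h0]
          simp
        · have hcl : IsClosed ((fun w : (Fin d → Bool) → X => w (fun _ => false)) ⁻¹' {x}) :=
            IsClosed.preimage (continuous_apply (fun _ : Fin d => false)) isClosed_singleton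
          exact hcl
      · intro w hw
        apply Metric.mem_closure_iff.mpr
        intro δ hδ
        obtain ⟨n, hn⟩ := coreLemma T hmin hwm d x (fun ε => Metric.ball (w ε) δ)
          (fun ε => Metric.isOpen_ball) (fun ε => ⟨w ε, Metric.mem_ball_self hδ⟩)
        refine ⟨Gp T.toEquiv d n (fun _ => x), ⟨Gp T.toEquiv d n, Gp_mem T.toEquiv d n, rfl⟩, ?_⟩
        rw [dist_pi_lt_iff hδ]
        intro ε
        rw [show Gp T.toEquiv d n (fun _ => x) ε
            = (T.toEquiv ^ (∑ i, if ε i then n i else 0)) x from rfl]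
        by_cases hε : ε = (fun _ => false)
        · subst hε
          have h0 : (∑ i, if (fun _ : Fin d => false) i then n i else 0) = 0 := by simp
          rw [h0, zpow_zero]
          have hwx : w (fun _ => false) = x := hw
          rw [show ((1 : Equiv.Perm X) x) = x from rfl, hwx]
          simpa using hδ
        · have := hn ε hε
          rw [Metric.mem_ball] at this
          rw [dist_comm]
          exact this
    refine ⟨part1, ?_⟩
    apply Set.eq_univ_of_forall
    intro w
    have hw : w ∈ faceOrbitClosure T d (fun _ => w (fun _ => false)) := by
      rw [part1]; exact rfl
    have hsub : {w' | ∃ g ∈ faceGroup T.toEquiv d, w' = g (fun _ => w (fun _ => false))} ⊆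
        {y | ∃ (x : X) (n : Fin d → ℤ),
          y = fun ε => (T.toEquiv ^ (∑ i, if ε i then n i else 0)) x} := by
      rintro v ⟨g, hg, rfl⟩
      obtain ⟨m, rfl⟩ := mem_faceGroup_exists T.toEquiv d g hg
      exact ⟨w (fun _ => false), m, funext fun ε => rfl⟩
    exact closure_mono hsub hw
end

section
/- Let (X,T) be a transitive dynamical system with transitive point x. Then Q^[d](X) equals the closed orbit of the diagonal point x^[d] = (x,...,x) under the parallelepiped group G^[d] generated by the diagonal transformation T^[d] and the face transformations T_1^[d], ..., T_d^[d]. -/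
/-- The diagonal transformation of the cube space `X^{2^d}`. -/
def diagEquiv {X : Type*} (T : X ≃ X) (d : ℕ) :
    Equiv.Perm ((Fin d → Bool) → X) :=
  Equiv.piCongrRight (fun _ : Fin d → Bool => T)

/-- The parallelepiped group `G^[d]`: generated by the diagonal transformation
and the face transformations. -/
def parallelepipedGroup {X : Type*} (T : X ≃ X) (d : ℕ) :
    Subgroup (Equiv.Perm ((Fin d → Bool) → X)) :=
  Subgroup.closure ({diagEquiv T d} ∪ {g | ∃ j : Fin d, g = faceEquiv T d j})

/-- `piCongrRight` as a monoid hom from the pointwise product of permutation groups. -/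
def cubeHom {X : Type*} (d : ℕ) :
    ((Fin d → Bool) → Equiv.Perm X) →* Equiv.Perm ((Fin d → Bool) → X) where
  toFun σ := Equiv.piCongrRight σ
  map_one' := Equiv.ext fun w => funext fun ε => rfl
  map_mul' σ τ := Equiv.ext fun w => funext fun ε => rfl

lemma cubeHom_apply {X : Type*} (d : ℕ) (σ : (Fin d → Bool) → Equiv.Perm X)
    (w : (Fin d → Bool) → X) : cubeHom d σ w = fun ε => σ ε (w ε) := rfl

lemma cubeHom_congr {X : Type*} (d : ℕ) {σ τ : (Fin d → Bool) → Equiv.Perm X}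
    (h : σ = τ) : cubeHom d σ = cubeHom d τ := by rw [h]

lemma diagEquiv_zpow {X : Type*} (T : Equiv.Perm X) (d : ℕ) (m : ℤ) :
    diagEquiv T d ^ m = cubeHom d (fun _ => T ^ m) := by
  have h : diagEquiv T d = cubeHom d (fun _ => T) := rfl
  rw [h, ← map_zpow]
  rfl

lemma faceEquiv_zpow {X : Type*} (T : Equiv.Perm X) (d : ℕ) (j : Fin d) (k : ℤ) :
    faceEquiv T d j ^ k = cubeHom d (fun ε => T ^ (if ε j then k else 0)) := by
  have h : faceEquiv T d j = cubeHom d (fun ε => if ε j then T else 1) := rfl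
  rw [h, ← map_zpow]
  refine cubeHom_congr d (funext fun ε => ?_)
  show (if ε j then T else 1) ^ k = T ^ (if ε j then k else 0)
  by_cases hj : ε j <;> simp [hj]

lemma cubeHom_mem {X : Type*} (T : Equiv.Perm X) (d : ℕ) (m : ℤ) (n : Fin d → ℤ) :
    cubeHom d (fun ε => T ^ (m + ∑ i, if ε i then n i else 0)) ∈
      parallelepipedGroup T d := by
  classical
  suffices h : ∀ s : Finset (Fin d),
      cubeHom d (fun ε => T ^ (m + ∑ i ∈ s, if ε i then n i else 0)) ∈
        parallelepipedGroup T d from h Finset.univ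
  intro s
  induction s using Finset.induction with
  | empty =>
    simp only [Finset.sum_empty, add_zero]
    rw [← diagEquiv_zpow]
    have h1 : diagEquiv T d ∈ parallelepipedGroup T d := by
      rw [parallelepipedGroup]
      exact Subgroup.subset_closure (Set.mem_union_left _ rfl)
    exact Subgroup.zpow_mem _ h1 m
  | @insert i s hni ih =>
    have key : (fun ε : Fin d → Bool => T ^ (m + ∑ x ∈ insert i s, if ε x then n x else 0))
        = (fun ε : Fin d → Bool => T ^ (if ε i then n i else 0)) *
          (fun ε : Fin d → Bool => T ^ (m + ∑ x ∈ s, if ε x then n x else 0)) := by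
      funext ε
      rw [Pi.mul_apply, ← zpow_add, Finset.sum_insert hni]
      congr 1
      ring
    rw [key, map_mul]
    refine mul_mem ?_ ih
    rw [← faceEquiv_zpow]
    have h1 : faceEquiv T d i ∈ parallelepipedGroup T d := by
      rw [parallelepipedGroup]
      exact Subgroup.subset_closure (Set.mem_union_right _ ⟨i, rfl⟩)
    exact Subgroup.zpow_mem _ h1 _

/-- Every element of the parallelepiped group has the explicit form. -/
lemma mem_parallelepipedGroup_iff {X : Type*} (T : Equiv.Perm X) (d : ℕ)
    {g : Equiv.Perm ((Fin d → Bool) → X)} (hg : g ∈ parallelepipedGroup T d) :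
    ∃ (m : ℤ) (n : Fin d → ℤ),
      g = cubeHom d (fun ε => T ^ (m + ∑ i, if ε i then n i else 0)) := by
  rw [parallelepipedGroup] at hg
  refine Subgroup.closure_induction ?_ ?_ ?_ ?_ hg
  · rintro g (rfl | ⟨j, rfl⟩)
    · refine ⟨1, 0, ?_⟩
      have h : (fun ε : Fin d → Bool => T ^ ((1:ℤ) + ∑ i, if ε i then (0 : Fin d → ℤ) i else 0))
          = fun _ => T := funext fun ε => by simp
      rw [h]; rfl
    · refine ⟨0, fun i => if i = j then 1 else 0, ?_⟩
      have h : (fun ε : Fin d → Bool =>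
          T ^ ((0:ℤ) + ∑ i, if ε i then (if i = j then (1:ℤ) else 0) else 0))
          = fun ε => if ε j then T else 1 := by
        funext ε
        have hsum : (∑ i, if ε i then (if i = j then (1:ℤ) else 0) else 0)
            = if ε j then 1 else 0 := by
          rw [Finset.sum_congr rfl
            (fun i _ => show (if ε i then (if i = j then (1:ℤ) else 0) else 0)
              = if i = j then (if ε j then (1:ℤ) else 0) else 0 by
                by_cases h : i = j
                · subst h; simp
                · simp [h])]
          simp
        rw [hsum]
        by_cases hj : ε j <;> simp [hj]
      rw [h]; rfl
  · refine ⟨0, 0, ?_⟩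
    have h : (fun ε : Fin d → Bool => T ^ ((0:ℤ) + ∑ i, if ε i then (0 : Fin d → ℤ) i else 0))
        = (1 : (Fin d → Bool) → Equiv.Perm X) := funext fun ε => by simp
    rw [h, map_one]
  · rintro a b _ _ ⟨m1, n1, rfl⟩ ⟨m2, n2, rfl⟩
    refine ⟨m1 + m2, n1 + n2, ?_⟩
    rw [← map_mul]
    refine cubeHom_congr d (funext fun ε => ?_)
    rw [Pi.mul_apply, ← zpow_add]
    congr 1
    have h : ∀ i : Fin d, (if ε i then (n1 + n2) i else 0)
        = (if ε i then n1 i else 0) + (if ε i then n2 i else 0) := by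
      intro i; by_cases h : ε i <;> simp [h]
    simp only [h, Finset.sum_add_distrib]
    ring
  · rintro a _ ⟨m, n, rfl⟩
    refine ⟨-m, -n, ?_⟩
    rw [← map_inv]
    refine cubeHom_congr d (funext fun ε => ?_)
    rw [Pi.inv_apply, ← zpow_neg]
    congr 1
    have h : ∀ i : Fin d, (if ε i then (-n) i else 0) = -(if ε i then n i else 0) := by
      intro i; by_cases h : ε i <;> simp [h]
    simp only [h, Finset.sum_neg_distrib]
    ring

lemma continuous_equiv_zpow {X : Type*} [TopologicalSpace X] (T : X ≃ₜ X) :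
    ∀ k : ℤ, Continuous fun z : X => (T.toEquiv ^ k) z := by
  have hn : ∀ n : ℕ, Continuous fun z : X => (T.toEquiv ^ n) z := by
    intro n
    induction n with
    | zero => simpa using continuous_id'
    | succ n ih =>
      have : (fun z : X => (T.toEquiv ^ (n + 1)) z)
          = fun z => (T.toEquiv ^ n) (T z) := by
        funext z; rw [pow_succ]; rfl
      rw [this]; exact ih.comp T.continuous
  have hsymm : ∀ n : ℕ, Continuous fun z : X => (T.symm.toEquiv ^ n) z := by
    intro n
    induction n with
    | zero => simpa using continuous_id'
    | succ n ih =>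
      have : (fun z : X => (T.symm.toEquiv ^ (n + 1)) z)
          = fun z => (T.symm.toEquiv ^ n) (T.symm z) := by
        funext z; rw [pow_succ]; rfl
      rw [this]; exact ih.comp T.symm.continuous
  intro k
  cases k with
  | ofNat n => simpa using hn n
  | negSucc n =>
    have : (T.toEquiv ^ (Int.negSucc n)) = T.symm.toEquiv ^ (n + 1) := by
      rw [zpow_negSucc, ← inv_pow]
      rfl
    rw [this]
    exact hsymm (n + 1)

theorem Qcube_eq_G_orbit_closure {X : Type*} [MetricSpace X] [CompactSpace X]
    (T : X ≃ₜ X) (x : X)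
    (htrans : Dense {y : X | ∃ n : ℤ, y = (T.toEquiv ^ n) x})
    (d : ℕ) (hd : 1 ≤ d) :
    Qcube T d =
      closure {w | ∃ g ∈ parallelepipedGroup T.toEquiv d,
        w = g (fun _ : Fin d → Bool => x)} := by
  set S1 : Set ((Fin d → Bool) → X) := {y | ∃ (x : X) (n : Fin d → ℤ),
    y = fun ε => (T.toEquiv ^ (∑ i, if ε i then n i else 0)) x} with hS1
  set S2 : Set ((Fin d → Bool) → X) := {w | ∃ g ∈ parallelepipedGroup T.toEquiv d,
    w = g (fun _ : Fin d → Bool => x)} with hS2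
  have hQ : Qcube T d = closure S1 := rfl
  rw [hQ]
  apply le_antisymm
  · -- closure S1 ⊆ closure S2
    apply closure_minimal _ isClosed_closure
    rintro y ⟨x', n, rfl⟩
    -- F is continuous, x' is a limit of orbit points, orbit points map into S2
    set F : X → ((Fin d → Bool) → X) :=
      fun z ε => (T.toEquiv ^ (∑ i, if ε i then n i else 0)) z with hF
    have hFc : Continuous F := continuous_pi fun ε => continuous_equiv_zpow T _
    have hx' : x' ∈ closure {y : X | ∃ m : ℤ, y = (T.toEquiv ^ m) x} := by
      rw [htrans.closure_eq]; trivial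
    have himg : F '' {y : X | ∃ m : ℤ, y = (T.toEquiv ^ m) x} ⊆ S2 := by
      rintro _ ⟨_, ⟨m, rfl⟩, rfl⟩
      refine ⟨cubeHom d (fun ε => T.toEquiv ^ (m + ∑ i, if ε i then n i else 0)),
        cubeHom_mem _ _ _ _, ?_⟩
      funext ε
      rw [cubeHom_apply]
      show (T.toEquiv ^ (∑ i, if ε i then n i else 0)) ((T.toEquiv ^ m) x)
        = (T.toEquiv ^ (m + ∑ i, if ε i then n i else 0)) _
      rw [add_comm, zpow_add]
      rfl
    have : F x' ∈ closure S2 := by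
      apply closure_mono himg
      exact image_closure_subset_closure_image hFc ⟨x', hx', rfl⟩
    exact this
  · -- closure S2 ⊆ closure S1
    apply closure_mono
    rintro w ⟨g, hg, rfl⟩
    obtain ⟨m, n, rfl⟩ := mem_parallelepipedGroup_iff T.toEquiv d hg
    refine ⟨(T.toEquiv ^ m) x, n, ?_⟩
    funext ε
    rw [cubeHom_apply]
    show (T.toEquiv ^ (m + ∑ i, if ε i then n i else 0)) x
      = (T.toEquiv ^ (∑ i, if ε i then n i else 0)) ((T.toEquiv ^ m) x)
    rw [add_comm, zpow_add]
    rfl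
end

section
/- Let π : (X,T) → (Y,T) be an extension of minimal systems on compact metric spaces. If (y₁,y₂) is a proximal pair in Y and x₁ ∈ π⁻¹(y₁), then there exists x₂ ∈ π⁻¹(y₂) such that (x₁,x₂) is a proximal pair in X. -/
/-- Proximality for the ℤ-system generated by a homeomorphism of a metric space. -/
def Proximal {X : Type*} [MetricSpace X] (T : X ≃ₜ X) (a b : X) : Prop :=
  ∀ δ > (0 : ℝ), ∃ n : ℤ, dist ((T.toEquiv ^ n) a) ((T.toEquiv ^ n) b) < δ

theorem proximal_lifts_along_extension {X Y : Type*}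
    [MetricSpace X] [CompactSpace X] [MetricSpace Y] [CompactSpace Y]
    (T : X ≃ₜ X) (S : Y ≃ₜ Y)
    (hminX : ∀ x : X, Dense {x' : X | ∃ n : ℤ, x' = (T.toEquiv ^ n) x})
    (hminY : ∀ y : Y, Dense {y' : Y | ∃ n : ℤ, y' = (S.toEquiv ^ n) y})
    (π : X → Y) (hπ : Continuous π) (hsurj : Function.Surjective π)
    (hcomm : ∀ x : X, π (T x) = S (π x))
    (y₁ y₂ : Y) (hprox : Proximal S y₁ y₂)
    (x₁ : X) (hx₁ : π x₁ = y₁) :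
    ∃ x₂ : X, π x₂ = y₂ ∧ Proximal T x₁ x₂ := by
  classical
  -- the ambient space of pairs of self-maps, with composition as multiplication
  letI M := (X → X) × (Y → Y)
  letI : Semigroup M :=
    { mul := fun a b => (a.1 ∘ b.1, a.2 ∘ b.2)
      mul_assoc := fun a b c => rfl }
  have hmul_fst : ∀ (a b : M) (x : X), (a * b).1 x = a.1 (b.1 x) := fun _ _ _ => rfl
  have hmul_snd : ∀ (a b : M) (y : Y), (a * b).2 y = a.2 (b.2 y) := fun _ _ _ => rfl
  -- generators
  set gen : ℤ → M := fun n => (fun x => (T.toEquiv ^ n) x, fun y => (S.toEquiv ^ n) y) with hgendef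
  set E : Set M := closure (Set.range gen) with hEdef
  -- continuity of integer powers
  have hcontT : ∀ n : ℤ, Continuous fun x : X => (T.toEquiv ^ n) x := by
    intro n
    induction n using Int.induction_on with
    | zero => simpa using continuous_id'
    | succ k ih =>
        have h : ∀ x, (T.toEquiv ^ ((k : ℤ) + 1)) x = (T.toEquiv ^ (k : ℤ)) (T x) := by
          intro x; rw [zpow_add_one]; rfl
        exact (ih.comp T.continuous).congr fun x => (h x).symm
    | pred k ih =>
        have h : ∀ x, (T.toEquiv ^ (-(k : ℤ) - 1)) x = (T.toEquiv ^ (-(k : ℤ))) (T.symm x) := by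
          intro x; rw [zpow_sub_one, Equiv.Perm.mul_apply, Equiv.Perm.inv_def]; rfl
        exact (ih.comp T.continuous_symm).congr fun x => (h x).symm
  have hcontS : ∀ n : ℤ, Continuous fun y : Y => (S.toEquiv ^ n) y := by
    intro n
    induction n using Int.induction_on with
    | zero => simpa using continuous_id'
    | succ k ih =>
        have h : ∀ y, (S.toEquiv ^ ((k : ℤ) + 1)) y = (S.toEquiv ^ (k : ℤ)) (S y) := by
          intro y; rw [zpow_add_one]; rfl
        exact (ih.comp S.continuous).congr fun y => (h y).symm
    | pred k ih =>
        have h : ∀ y, (S.toEquiv ^ (-(k : ℤ) - 1)) y = (S.toEquiv ^ (-(k : ℤ))) (S.symm y) := by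
          intro y; rw [zpow_sub_one, Equiv.Perm.mul_apply, Equiv.Perm.inv_def]; rfl
        exact (ih.comp S.continuous_symm).congr fun y => (h y).symm
  -- equivariance for all integer powers
  have hcommz : ∀ (n : ℤ) (x : X), π ((T.toEquiv ^ n) x) = (S.toEquiv ^ n) (π x) := by
    intro n
    induction n using Int.induction_on with
    | zero => intro x; simp
    | succ k ih =>
        intro x
        have h1 : (T.toEquiv ^ ((k : ℤ) + 1)) x = (T.toEquiv ^ (k : ℤ)) (T x) := by
          rw [zpow_add_one]; rfl
        have h2 : (S.toEquiv ^ ((k : ℤ) + 1)) (π x) = (S.toEquiv ^ (k : ℤ)) (S (π x)) := by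
          rw [zpow_add_one]; rfl
        rw [h1, h2, ih (T x), hcomm x]
    | pred k ih =>
        intro x
        have h1 : (T.toEquiv ^ (-(k : ℤ) - 1)) x = (T.toEquiv ^ (-(k : ℤ))) (T.symm x) := by
          rw [zpow_sub_one, Equiv.Perm.mul_apply, Equiv.Perm.inv_def]; rfl
        have h2 : (S.toEquiv ^ (-(k : ℤ) - 1)) (π x) = (S.toEquiv ^ (-(k : ℤ))) (S.symm (π x)) := by
          rw [zpow_sub_one, Equiv.Perm.mul_apply, Equiv.Perm.inv_def]; rfl
        have h3 : π (T.symm x) = S.symm (π x) := by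
          have := hcomm (T.symm x)
          rw [T.apply_symm_apply] at this
          rw [this, S.symm_apply_apply]
        rw [h1, h2, ih (T.symm x), h3]
  -- multiplication of generators
  have hgenmul : ∀ n m : ℤ, gen n * gen m = gen (n + m) := by
    intro n m
    refine Prod.ext ?_ ?_
    · funext x
      show (T.toEquiv ^ n) ((T.toEquiv ^ m) x) = (T.toEquiv ^ (n + m)) x
      rw [zpow_add]; rfl
    · funext y
      show (S.toEquiv ^ n) ((S.toEquiv ^ m) y) = (S.toEquiv ^ (n + m)) y
      rw [zpow_add]; rfl
  -- right multiplication is continuous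
  have hmul_right_cont : ∀ r : M, Continuous (· * r) := by
    intro r
    refine Continuous.prodMk ?_ ?_
    · exact continuous_pi fun x => (continuous_apply (r.1 x)).comp continuous_fst
    · exact continuous_pi fun y => (continuous_apply (r.2 y)).comp continuous_snd
  -- E is closed under multiplication
  have hEclosed : IsClosed E := isClosed_closure
  have hgenE : ∀ n : ℤ, gen n ∈ E := fun n => subset_closure ⟨n, rfl⟩
  have hmulE : ∀ a ∈ E, ∀ b ∈ E, a * b ∈ E := by
    have step1 : ∀ (n : ℤ), ∀ b ∈ E, gen n * b ∈ E := by
      intro n b hb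
      have hcontL : Continuous fun b : M => gen n * b := by
        refine Continuous.prodMk ?_ ?_
        · exact continuous_pi fun x =>
            (hcontT n).comp ((continuous_apply x).comp continuous_fst)
        · exact continuous_pi fun y =>
            (hcontS n).comp ((continuous_apply y).comp continuous_snd)
      have hsub : Set.range gen ⊆ (fun b : M => gen n * b) ⁻¹' E := by
        rintro _ ⟨m, rfl⟩
        simp only [Set.mem_preimage, hgenmul]
        exact hgenE _
      have := closure_minimal hsub (hEclosed.preimage hcontL)
      exact this hb
    intro a ha b hb
    have hsub : Set.range gen ⊆ (· * b) ⁻¹' E := by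
      rintro _ ⟨n, rfl⟩
      exact step1 n b hb
    have := closure_minimal hsub (hEclosed.preimage (hmul_right_cont b))
    exact this ha
  -- equivariance passes to E
  have hπE : ∀ pq ∈ E, ∀ x : X, π (pq.1 x) = pq.2 (π x) := by
    have hC : IsClosed {pq : M | ∀ x : X, π (pq.1 x) = pq.2 (π x)} := by
      have : {pq : M | ∀ x : X, π (pq.1 x) = pq.2 (π x)} =
          ⋂ x : X, {pq : M | π (pq.1 x) = pq.2 (π x)} := by
        ext pq; simp [Set.mem_iInter]
      rw [this]
      exact isClosed_iInter fun x =>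
        isClosed_eq (hπ.comp ((continuous_apply x).comp continuous_fst))
          ((continuous_apply (π x)).comp continuous_snd)
    have hsub : Set.range gen ⊆ {pq : M | ∀ x : X, π (pq.1 x) = pq.2 (π x)} := by
      rintro _ ⟨n, rfl⟩ x
      exact hcommz n x
    intro pq hpq
    exact closure_minimal hsub hC hpq
  -- there is an element of E collapsing y₁ and y₂
  have hcollapse : ∃ pq ∈ E, pq.2 y₁ = pq.2 y₂ := by
    set K : ℕ → Set M := fun k =>
      E ∩ {pq : M | dist (pq.2 y₁) (pq.2 y₂) ≤ 1 / ((k : ℝ) + 1)} with hKdef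
    have hKclosed : ∀ k, IsClosed (K k) := by
      intro k
      exact hEclosed.inter (isClosed_le
        (((continuous_apply y₁).comp continuous_snd).dist
          ((continuous_apply y₂).comp continuous_snd)) continuous_const)
    have hKne : ∀ k, (K k).Nonempty := by
      intro k
      have hpos : (0 : ℝ) < 1 / ((k : ℝ) + 1) := by positivity
      obtain ⟨n, hn⟩ := hprox _ hpos
      exact ⟨gen n, hgenE n, le_of_lt hn⟩
    have hKanti : ∀ i j : ℕ, i ≤ j → K j ⊆ K i := by
      intro i j hij pq hpq
      have h2 : dist (pq.2 y₁) (pq.2 y₂) ≤ 1 / ((j : ℝ) + 1) := hpq.2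
      have h3 : (1 : ℝ) / ((j : ℝ) + 1) ≤ 1 / ((i : ℝ) + 1) := by
        apply one_div_le_one_div_of_le (by positivity)
        have : (i : ℝ) ≤ (j : ℝ) := Nat.cast_le.mpr hij
        linarith
      exact ⟨hpq.1, le_trans h2 h3⟩
    have hdir : Directed (· ⊇ ·) K := fun i j =>
      ⟨max i j, hKanti i (max i j) (le_max_left _ _), hKanti j (max i j) (le_max_right _ _)⟩
    have hne : (⋂ k, K k).Nonempty :=
      IsCompact.nonempty_iInter_of_directed_nonempty_isCompact_isClosed K hdir hKne
        (fun k => (hKclosed k).isCompact) hKclosed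
    obtain ⟨pq, hpq⟩ := hne
    simp only [Set.mem_iInter] at hpq
    refine ⟨pq, (hpq 0).1, ?_⟩
    have hle : dist (pq.2 y₁) (pq.2 y₂) ≤ 0 := by
      refine ge_of_tendsto tendsto_one_div_add_atTop_nhds_zero_nat ?_
      exact Filter.Eventually.of_forall fun k => (hpq k).2
    exact dist_le_zero.mp hle
  -- E acts transitively on Y
  have htrans : ∀ z w : Y, ∃ pq ∈ E, pq.2 z = w := by
    intro z w
    have hev : Continuous fun pq : M => pq.2 z := (continuous_apply z).comp continuous_snd
    have hEcpt : IsCompact E := hEclosed.isCompact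
    have himg : IsClosed ((fun pq : M => pq.2 z) '' E) := (hEcpt.image hev).isClosed
    have horb : {y' : Y | ∃ n : ℤ, y' = (S.toEquiv ^ n) z} ⊆ (fun pq : M => pq.2 z) '' E := by
      rintro _ ⟨n, rfl⟩
      exact ⟨gen n, hgenE n, rfl⟩
    have hw : w ∈ closure {y' : Y | ∃ n : ℤ, y' = (S.toEquiv ^ n) z} := by
      rw [(hminY z).closure_eq]; trivial
    have := closure_minimal horb himg
    obtain ⟨pq, hpq, hpq2⟩ := this hw
    exact ⟨pq, hpq, hpq2⟩
  -- the key compact subsemigroup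
  set G : Set M := {pq ∈ E | pq.2 y₁ = y₂ ∧ pq.2 y₂ = y₂} with hGdef
  have hGne : G.Nonempty := by
    obtain ⟨r, hrE, hr⟩ := hcollapse
    obtain ⟨l, hlE, hl⟩ := htrans (r.2 y₂) y₂
    refine ⟨l * r, hmulE l hlE r hrE, ?_, ?_⟩
    · rw [hmul_snd, hr, hl]
    · rw [hmul_snd, hl]
  have hGclosed : IsClosed G := by
    have : G = E ∩ ({pq : M | pq.2 y₁ = y₂} ∩ {pq : M | pq.2 y₂ = y₂}) := by
      ext pq; constructor
      · rintro ⟨h1, h2, h3⟩; exact ⟨h1, h2, h3⟩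
      · rintro ⟨h1, h2, h3⟩; exact ⟨h1, h2, h3⟩
    rw [this]
    exact hEclosed.inter
      ((isClosed_eq ((continuous_apply y₁).comp continuous_snd) continuous_const).inter
        (isClosed_eq ((continuous_apply y₂).comp continuous_snd) continuous_const))
  have hGmul : ∀ a ∈ G, ∀ b ∈ G, a * b ∈ G := by
    rintro a ⟨haE, ha1, ha2⟩ b ⟨hbE, hb1, hb2⟩
    refine ⟨hmulE a haE b hbE, ?_, ?_⟩
    · rw [hmul_snd, hb1, ha2]
    · rw [hmul_snd, hb2, ha2]
  -- find an idempotent in G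
  obtain ⟨m, hmG, hmid⟩ :=
    exists_idempotent_in_compact_subsemigroup hmul_right_cont G hGne
      hGclosed.isCompact hGmul
  obtain ⟨hmE, hm1, hm2⟩ := hmG
  -- the lifted point
  refine ⟨m.1 x₁, ?_, ?_⟩
  · rw [hπE m hmE x₁, hx₁, hm1]
  · intro δ hδ
    have hfix : m.1 (m.1 x₁) = m.1 x₁ := by
      conv_rhs => rw [← hmid]
      rw [hmul_fst]
    -- an open neighborhood of m
    set U : Set M := {pq : M | dist (pq.1 x₁) (m.1 x₁) < δ / 2 ∧
        dist (pq.1 (m.1 x₁)) (m.1 x₁) < δ / 2} with hUdef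
    have hUopen : IsOpen U := by
      have h1 : IsOpen {pq : M | dist (pq.1 x₁) (m.1 x₁) < δ / 2} :=
        isOpen_lt (((continuous_apply x₁).comp continuous_fst).dist continuous_const)
          continuous_const
      have h2 : IsOpen {pq : M | dist (pq.1 (m.1 x₁)) (m.1 x₁) < δ / 2} :=
        isOpen_lt (((continuous_apply (m.1 x₁)).comp continuous_fst).dist continuous_const)
          continuous_const
      exact h1.inter h2
    have hmU : m ∈ U := by
      constructor
      · simpa using (by positivity : (0:ℝ) < δ / 2)
      · rw [hfix]; simpa using (by positivity : (0:ℝ) < δ / 2)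
    have := (mem_closure_iff.mp hmE) U hUopen hmU
    obtain ⟨_, hgU, n, rfl⟩ := this
    refine ⟨n, ?_⟩
    have hd1 : dist ((T.toEquiv ^ n) x₁) (m.1 x₁) < δ / 2 := hgU.1
    have hd2 : dist ((T.toEquiv ^ n) (m.1 x₁)) (m.1 x₁) < δ / 2 := hgU.2
    calc dist ((T.toEquiv ^ n) x₁) ((T.toEquiv ^ n) (m.1 x₁))
        ≤ dist ((T.toEquiv ^ n) x₁) (m.1 x₁) +
          dist (m.1 x₁) ((T.toEquiv ^ n) (m.1 x₁)) := dist_triangle _ _ _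
      _ < δ / 2 + δ / 2 := by rw [dist_comm (m.1 x₁)]; exact add_lt_add hd1 hd2
      _ = δ := by ring
end

section
/- Let (X,T) be a system on a compact metric space, let x ∈ X, let y ∈ X be a minimal point proximal to x, and let U be an open neighborhood of y. Then N(x,U) = {n ∈ ℤ : Tⁿx ∈ U} is an IP set (it contains FS({pᵢ}ᵢ₌₁^∞) for some integer sequence (pᵢ)); in particular, for every d ≥ 1 there exists (p₁,...,p_d) ∈ ℤ^d such that T^{p·ε}x ∈ U for every nonzero ε ∈ {0,1}^d. -/
open Filter Topology

/-- A point is minimal iff its orbit closure is a minimal subsystem. -/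
def IsMinimalPoint {X : Type*} [TopologicalSpace X] (T : X ≃ₜ X) (y : X) : Prop :=
  ∀ z ∈ closure {y' : X | ∃ n : ℤ, y' = (T.toEquiv ^ n) y},
    y ∈ closure {z' : X | ∃ n : ℤ, z' = (T.toEquiv ^ n) z}

private lemma contZ {X : Type*} [TopologicalSpace X] (T : X ≃ₜ X) (n : ℤ) :
    Continuous fun a : X => (T.toEquiv ^ n) a := by
  cases n with
  | ofNat m =>
      have : (T.toEquiv ^ (Int.ofNat m)) = T.toEquiv ^ m := by
        simp [zpow_natCast]
      rw [this, ← Equiv.Perm.iterate_eq_pow]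
      exact T.continuous.iterate m
  | negSucc m =>
      have h1 : (T.toEquiv ^ (Int.negSucc m)) = (T.toEquiv⁻¹) ^ (m + 1) := by
        rw [zpow_negSucc, inv_pow]
      have h2 : (T.toEquiv⁻¹ : Equiv.Perm X) = T.symm.toEquiv := rfl
      rw [h1, h2, ← Equiv.Perm.iterate_eq_pow]
      exact T.symm.continuous.iterate (m + 1)

private lemma zadd_apply {X : Type*} [TopologicalSpace X] (T : X ≃ₜ X) (m k : ℤ) (a : X) :
    (T.toEquiv ^ (k + m)) a = (T.toEquiv ^ k) ((T.toEquiv ^ m) a) := by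
  rw [zpow_add]; rfl

private lemma key_near {X : Type*} [MetricSpace X] [CompactSpace X]
    (T : X ≃ₜ X) (x y : X) (hymin : IsMinimalPoint T y) (hprox : Proximal T x y) :
    ∀ ε > (0 : ℝ), ∃ n : ℤ,
      dist ((T.toEquiv ^ n) x) y < ε ∧ dist ((T.toEquiv ^ n) y) y < ε := by
  intro ε hε
  have hseq : ∀ k : ℕ, ∃ n : ℤ,
      dist ((T.toEquiv ^ n) x) ((T.toEquiv ^ n) y) < 1 / (k + 1) := by
    intro k; exact hprox _ (by positivity)
  choose ns hns using hseq
  set u : ℕ → X × X := fun k => ((T.toEquiv ^ ns k) x, (T.toEquiv ^ ns k) y) with hu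
  obtain ⟨z, -, φ, hφ, hlim⟩ := isCompact_univ.tendsto_subseq (x := u) (fun k => Set.mem_univ _)
  have hlim1 : Tendsto (fun k => (u (φ k)).1) atTop (𝓝 z.1) :=
    (continuous_fst.tendsto z).comp hlim
  have hlim2 : Tendsto (fun k => (u (φ k)).2) atTop (𝓝 z.2) :=
    (continuous_snd.tendsto z).comp hlim
  have hz : z.1 = z.2 := by
    have hd : Tendsto (fun k => dist (u (φ k)).1 (u (φ k)).2) atTop (𝓝 (dist z.1 z.2)) :=
      hlim1.dist hlim2
    have hd0 : Tendsto (fun k => dist (u (φ k)).1 (u (φ k)).2) atTop (𝓝 0) := by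
      have hle : ∀ k : ℕ, dist (u (φ k)).1 (u (φ k)).2 ≤ 1 / ((k : ℝ) + 1) := by
        intro k
        refine le_trans (le_of_lt (hns (φ k))) ?_
        apply one_div_le_one_div_of_le (by positivity)
        have h : k ≤ φ k := hφ.le_apply
        have : (k : ℝ) ≤ (φ k : ℝ) := Nat.cast_le.mpr h
        linarith
      exact squeeze_zero (fun k => dist_nonneg) hle tendsto_one_div_add_atTop_nhds_zero_nat
    exact dist_eq_zero.mp (tendsto_nhds_unique hd hd0)
  have hz2 : z.2 ∈ closure {y' : X | ∃ n : ℤ, y' = (T.toEquiv ^ n) y} :=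
    mem_closure_of_tendsto hlim2 (Filter.Eventually.of_forall fun k => ⟨ns (φ k), rfl⟩)
  have hy' := hymin z.2 hz2
  obtain ⟨w, ⟨m, rfl⟩, hw⟩ := Metric.mem_closure_iff.mp hy' (ε / 2) (by positivity)
  obtain ⟨δ, hδ, hδ'⟩ := Metric.continuousAt_iff.mp ((contZ T m).continuousAt (x := z.2))
    (ε / 2) (by positivity)
  obtain ⟨N1, hN1⟩ := (Metric.tendsto_atTop.mp hlim1) δ hδ
  obtain ⟨N2, hN2⟩ := (Metric.tendsto_atTop.mp hlim2) δ hδ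
  set k := max N1 N2
  have h1 : dist (u (φ k)).1 z.2 < δ := by rw [← hz]; exact hN1 k (le_max_left _ _)
  have h2 : dist (u (φ k)).2 z.2 < δ := hN2 k (le_max_right _ _)
  refine ⟨m + ns (φ k), ?_, ?_⟩
  · rw [zadd_apply]
    calc dist ((T.toEquiv ^ m) ((T.toEquiv ^ ns (φ k)) x)) y
        ≤ dist ((T.toEquiv ^ m) ((T.toEquiv ^ ns (φ k)) x)) ((T.toEquiv ^ m) z.2)
            + dist ((T.toEquiv ^ m) z.2) y := dist_triangle _ _ _
      _ < ε / 2 + ε / 2 := by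
          have := hδ' h1
          rw [dist_comm ((T.toEquiv ^ m) z.2) y]
          exact add_lt_add this hw
      _ = ε := by ring
  · rw [zadd_apply]
    calc dist ((T.toEquiv ^ m) ((T.toEquiv ^ ns (φ k)) y)) y
        ≤ dist ((T.toEquiv ^ m) ((T.toEquiv ^ ns (φ k)) y)) ((T.toEquiv ^ m) z.2)
            + dist ((T.toEquiv ^ m) z.2) y := dist_triangle _ _ _
      _ < ε / 2 + ε / 2 := by
          have := hδ' h2
          rw [dist_comm ((T.toEquiv ^ m) z.2) y]
          exact add_lt_add this hw
      _ = ε := by ring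

private lemma buildSeq (P : ℕ → (ℕ → ℤ) → Prop)
    (hmono : ∀ k (p q : ℕ → ℤ), (∀ i, i < k → p i = q i) → P k p → P k q)
    (h0 : P 0 fun _ => 0)
    (hstep : ∀ k p, P k p → ∃ m, P (k + 1) (Function.update p k m)) :
    ∃ p : ℕ → ℤ, ∀ k, P k p := by
  let g : (k : ℕ) → {p : ℕ → ℤ // P k p} := fun k =>
    Nat.rec ⟨fun _ => 0, h0⟩
      (fun k ih => ⟨Function.update ih.1 k (Classical.choose (hstep k ih.1 ih.2)),
        Classical.choose_spec (hstep k ih.1 ih.2)⟩) k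
  have hg : ∀ k, (g (k + 1)).1
      = Function.update (g k).1 k (Classical.choose (hstep k (g k).1 (g k).2)) := fun k => rfl
  have stab : ∀ i k, i < k → (g k).1 i = (g (i + 1)).1 i := by
    intro i k
    induction k with
    | zero => omega
    | succ k ih =>
        intro h
        rcases Nat.lt_succ_iff_lt_or_eq.mp h with h | h
        · rw [hg, Function.update_of_ne (by omega)]; exact ih h
        · subst h; rfl
  exact ⟨fun i => (g (i + 1)).1 i,
    fun k => hmono k (g k).1 _ (fun i hi => stab i k hi) (g k).2⟩

theorem central_is_IP {X : Type*} [MetricSpace X] [CompactSpace X]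
    (T : X ≃ₜ X) (x y : X) (hymin : IsMinimalPoint T y) (hprox : Proximal T x y)
    (U : Set X) (hU : IsOpen U) (hyU : y ∈ U) :
    (∃ p : ℕ → ℤ, ∀ α : Finset ℕ, α.Nonempty →
      (T.toEquiv ^ (∑ i ∈ α, p i)) x ∈ U) ∧
    ∀ d : ℕ, 1 ≤ d → ∃ n : Fin d → ℤ,
      ∀ ε : Fin d → Bool, ε ≠ (fun _ => false) →
        (T.toEquiv ^ (∑ i, if ε i then n i else 0)) x ∈ U := by
  obtain ⟨ε₀, hε₀, hball⟩ := Metric.isOpen_iff.mp hU y hyU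
  set P : ℕ → (ℕ → ℤ) → Prop := fun k p =>
    ∀ α : Finset ℕ, α.Nonempty → α ⊆ Finset.range k →
      dist ((T.toEquiv ^ (∑ i ∈ α, p i)) x) y < ε₀ ∧
      dist ((T.toEquiv ^ (∑ i ∈ α, p i)) y) y < ε₀ * (1 - (2 : ℝ)⁻¹ ^ k) with hP
  have hmono : ∀ k (p q : ℕ → ℤ), (∀ i, i < k → p i = q i) → P k p → P k q := by
    intro k p q hpq hp α hα hsub
    have : ∑ i ∈ α, q i = ∑ i ∈ α, p i := by
      apply Finset.sum_congr rfl
      intro i hi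
      exact (hpq i (Finset.mem_range.mp (hsub hi))).symm
    rw [this]
    exact hp α hα hsub
  have h0 : P 0 fun _ => 0 := by
    intro α hα hsub
    simp only [Finset.range_zero, Finset.subset_empty] at hsub
    exact absurd hsub (Finset.nonempty_iff_ne_empty.mp hα)
  have hstep : ∀ k p, P k p → ∃ m, P (k + 1) (Function.update p k m) := by
    intro k p hp
    set c : ℝ := ε₀ * (1 - (2 : ℝ)⁻¹ ^ k) with hc
    set c' : ℝ := ε₀ * (1 - (2 : ℝ)⁻¹ ^ (k + 1)) with hc'
    set η : ℝ := ε₀ * (2 : ℝ)⁻¹ ^ (k + 2) with hη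
    have hpow : (0 : ℝ) < (2 : ℝ)⁻¹ ^ k := by positivity
    have hpow1 : (0 : ℝ) < (2 : ℝ)⁻¹ ^ k * 2⁻¹ := by positivity
    have hηpos : 0 < η := by positivity
    have harith1 : η + c < ε₀ := by
      rw [hη, hc]; rw [pow_succ, pow_succ]; nlinarith
    have harith2 : η + c < c' := by
      rw [hη, hc, hc']; rw [pow_succ, pow_succ]; nlinarith
    have hcnn : 0 ≤ c := by
      rw [hc]
      have : (2 : ℝ)⁻¹ ^ k ≤ 1 := pow_le_one₀ (by norm_num) (by norm_num)
      nlinarith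
    -- continuity: find δ
    set S := (Finset.range k).powerset with hS
    set g : X → ℝ := fun z => ∑ β ∈ S,
      dist ((T.toEquiv ^ (∑ i ∈ β, p i)) z) ((T.toEquiv ^ (∑ i ∈ β, p i)) y) with hgdef
    have hgc : Continuous g := by
      apply continuous_finset_sum
      intro β _
      exact (contZ T _).dist continuous_const
    have hgy : g y = 0 := by
      rw [hgdef]; simp
    obtain ⟨δ, hδpos, hδ⟩ := Metric.continuousAt_iff.mp hgc.continuousAt η hηpos
    have hδ' : ∀ z : X, dist z y < δ → ∀ β ∈ S,
        dist ((T.toEquiv ^ (∑ i ∈ β, p i)) z) ((T.toEquiv ^ (∑ i ∈ β, p i)) y) < η := by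
      intro z hzy β hβ
      have h1 := hδ hzy
      rw [hgy, Real.dist_0_eq_abs] at h1
      have h2 : dist ((T.toEquiv ^ (∑ i ∈ β, p i)) z) ((T.toEquiv ^ (∑ i ∈ β, p i)) y) ≤ g z :=
        Finset.single_le_sum (f := fun β => dist ((T.toEquiv ^ (∑ i ∈ β, p i)) z)
          ((T.toEquiv ^ (∑ i ∈ β, p i)) y)) (fun _ _ => dist_nonneg) hβ
      calc dist ((T.toEquiv ^ (∑ i ∈ β, p i)) z) ((T.toEquiv ^ (∑ i ∈ β, p i)) y)
          ≤ g z := h2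
        _ ≤ |g z| := le_abs_self _
        _ < η := h1
    obtain ⟨m, hmx, hmy⟩ := key_near T x y hymin hprox (min δ η) (lt_min hδpos hηpos)
    refine ⟨m, ?_⟩
    intro α hα hsub
    by_cases hk : k ∈ α
    · set β := α.erase k with hβdef
      have hβ : β ⊆ Finset.range k := by
        intro i hi
        obtain ⟨hne, hiα⟩ := Finset.mem_erase.mp hi
        have := Finset.mem_range.mp (hsub hiα)
        exact Finset.mem_range.mpr (by omega)
      have hβS : β ∈ S := Finset.mem_powerset.mpr hβ
      have hsum : ∑ i ∈ α, Function.update p k m i = (∑ i ∈ β, p i) + m := by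
        rw [← Finset.sum_erase_add α _ hk, Function.update_self]
        congr 1
        apply Finset.sum_congr rfl
        intro i hi
        exact Function.update_of_ne (Finset.mem_erase.mp hi).1 _ _
      -- distance bound for the y-orbit piece
      have hβy : dist ((T.toEquiv ^ (∑ i ∈ β, p i)) y) y ≤ c := by
        rcases Finset.eq_empty_or_nonempty β with h | h
        · rw [h]; simp [hcnn]
        · exact le_of_lt ((hp β h hβ).2)
      have key : ∀ a : X, dist ((T.toEquiv ^ m) a) y < min δ η →
          dist ((T.toEquiv ^ (∑ i ∈ α, Function.update p k m i)) a) y < η + c := by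
        intro a ha
        rw [hsum, zadd_apply]
        calc dist ((T.toEquiv ^ (∑ i ∈ β, p i)) ((T.toEquiv ^ m) a)) y
            ≤ dist ((T.toEquiv ^ (∑ i ∈ β, p i)) ((T.toEquiv ^ m) a))
                ((T.toEquiv ^ (∑ i ∈ β, p i)) y)
              + dist ((T.toEquiv ^ (∑ i ∈ β, p i)) y) y := dist_triangle _ _ _
          _ < η + c := add_lt_add_of_lt_of_le
              (hδ' _ (lt_of_lt_of_le ha (min_le_left _ _)) β hβS) hβy
      exact ⟨lt_trans (key x hmx) harith1, lt_trans (key y hmy) harith2⟩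
    · -- k ∉ α : old sums
      have hsub' : α ⊆ Finset.range k := by
        intro i hi
        have := Finset.mem_range.mp (hsub hi)
        have hne : i ≠ k := fun h => hk (by rwa [h] at hi)
        exact Finset.mem_range.mpr (by omega)
      have hsum : ∑ i ∈ α, Function.update p k m i = ∑ i ∈ α, p i := by
        apply Finset.sum_congr rfl
        intro i hi
        exact Function.update_of_ne (fun h => hk (by rwa [h] at hi)) _ _
      rw [hsum]
      obtain ⟨h1, h2⟩ := hp α hα hsub'
      refine ⟨h1, lt_of_lt_of_le h2 ?_⟩
      apply mul_le_mul_of_nonneg_left _ (le_of_lt hε₀)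
      have : (2 : ℝ)⁻¹ ^ (k + 1) ≤ (2 : ℝ)⁻¹ ^ k :=
        pow_le_pow_of_le_one (by norm_num) (by norm_num) (by omega)
      linarith
  obtain ⟨p, hp⟩ := buildSeq P hmono h0 hstep
  have main : ∀ α : Finset ℕ, α.Nonempty → (T.toEquiv ^ (∑ i ∈ α, p i)) x ∈ U := by
    intro α hα
    set k := α.sup id + 1 with hk
    have hsub : α ⊆ Finset.range k := by
      intro i hi
      exact Finset.mem_range.mpr (Nat.lt_succ_of_le (Finset.le_sup (f := id) hi))
    exact hball ((hp k α hα hsub).1)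
  refine ⟨⟨p, main⟩, ?_⟩
  intro d hd
  refine ⟨fun i => p i, ?_⟩
  intro ε hε
  set α : Finset ℕ := (Finset.univ.filter (fun i : Fin d => ε i = true)).image Fin.val with hα
  have hsum : ∑ i, (if ε i then p i else 0) = ∑ i ∈ α, p i := by
    rw [hα, Finset.sum_image (fun a _ b _ h => Fin.val_injective h)]
    rw [Finset.sum_filter]
  have hne : α.Nonempty := by
    by_contra h
    apply hε
    funext i
    by_contra hi
    have : ε i = true := by
      cases h' : ε i
      · exact absurd h' hi
      · rfl
    exact h ⟨i, Finset.mem_image.mpr ⟨i, Finset.mem_filter.mpr ⟨Finset.mem_univ _, this⟩, rfl⟩⟩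
  rw [hsum]
  exact main α hne
end
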